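/- arXiv:1802.06742 — 3 statements merged into one kernel-verified Lean document; each statement's English description precedes it below -/
import Mathlib

section
/- Let G be a finite simple graph on n ≥ 2 vertices with maximum degree at most 3, and let u be a vertex of G. Then the set B of vertices at distance at most 2·⌈log₂ n⌉ from u either contains a vertex whose degree in G is at most 2, or contains all vertices of a theta of G. -/
open SimpleGraph

/-- A theta of `G`: two distinct vertices `a` and `b` together with three pairwise distinct
paths from `a` to `b` that pairwise share no vertices other than `a` and `b`. -/
def IsTheta {V : Type*} (G : SimpleGraph V) (a b : V) (p₁ p₂ p₃ : G.Walk a b) : Prop :=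
  a ≠ b ∧ p₁.IsPath ∧ p₂.IsPath ∧ p₃.IsPath ∧
  p₁ ≠ p₂ ∧ p₁ ≠ p₃ ∧ p₂ ≠ p₃ ∧
  (∀ x ∈ p₁.support, x ∈ p₂.support → x = a ∨ x = b) ∧
  (∀ x ∈ p₁.support, x ∈ p₃.support → x = a ∨ x = b) ∧
  (∀ x ∈ p₂.support, x ∈ p₃.support → x = a ∨ x = b)

namespace ThetaAux
variable {V : Type*} {G : SimpleGraph V}

/-- first-hit decomposition of a walk w.r.t. a set `S` containing the end. -/
theorem exists_firstHit (S : Set V) [DecidablePred (· ∈ S)] {a b : V} (p : G.Walk a b)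
    (hb : b ∈ S) :
    ∃ (m : V) (q : G.Walk a m) (r : G.Walk m b),
      p = q.append r ∧ m ∈ S ∧ ∀ x ∈ q.support, x ≠ m → x ∉ S := by
  induction p with
  | nil => exact ⟨_, Walk.nil, Walk.nil, rfl, hb, by simp⟩
  | @cons a' c' b' h q ih =>
    by_cases ha : a' ∈ S
    · exact ⟨a', Walk.nil, Walk.cons h q, rfl, ha, by simp⟩
    · obtain ⟨m, q', r, hsplit, hm, hq'⟩ := ih hb
      refine ⟨m, Walk.cons h q', r, by rw [Walk.cons_append, ← hsplit], hm, ?_⟩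
      intro x hx hxm
      rw [Walk.support_cons] at hx
      rcases List.mem_cons.mp hx with rfl | hx'
      · exact ha
      · exact hq' x hx' hxm

end ThetaAux

namespace ThetaAux
variable {V : Type*} {G : SimpleGraph V}

theorem not_mem_edge_of_not_mem_support {a b v : V} {p : G.Walk a b} (hv : v ∉ p.support)
    {e : Sym2 V} (he : e ∈ p.edges) : v ∉ e := by
  intro hve
  induction e using Sym2.ind with
  | _ c d =>
    rcases Sym2.mem_iff.mp hve with rfl | rfl
    · exact hv (p.fst_mem_support_of_mem_edges he)
    · exact hv (p.snd_mem_support_of_mem_edges he)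

theorem firstEdge_mem {a b : V} {p : G.Walk a b} (hp : ¬ p.Nil) :
    s(a, p.getVert 1) ∈ p.edges := by
  cases p with
  | nil => simp at hp
  | cons h q => simp [Walk.edges_cons, Walk.getVert_cons]

theorem end_mem_tail_support {a b : V} {p : G.Walk a b} (hp : ¬ p.Nil) :
    b ∈ p.support.tail := by
  cases p with
  | nil => simp at hp
  | cons h q => simpa using q.end_mem_support

/-- a vertex on a cycle has two distinct neighbours on the cycle. -/
theorem cycle_neighbors {a : V} {C : G.Walk a a} (hC : C.IsCycle) :
    ∃ n₁ n₂ : V, n₁ ≠ n₂ ∧ G.Adj a n₁ ∧ G.Adj a n₂ ∧ n₁ ∈ C.support ∧ n₂ ∈ C.support := by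
  obtain ⟨c, h, t, rfl⟩ := Walk.not_nil_iff.mp hC.not_nil
  have ht : ¬ t.Nil := by
    intro hnil
    rw [Walk.nil_iff_length_eq] at hnil
    exact h.ne (Walk.eq_of_length_eq_zero hnil).symm
  have htr : ¬ t.reverse.Nil := by
    rwa [Walk.nil_iff_length_eq, Walk.length_reverse, ← Walk.nil_iff_length_eq]
  obtain ⟨c', h', t', hrev⟩ := Walk.not_nil_iff.mp htr
  refine ⟨c, c', ?_, h, h', by simp, ?_⟩
  · -- if c = c' then the edge s(a,c) appears twice in the trail
    rintro rfl
    have h1 : s(a, c) ∈ t.edges := by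
      have : s(a, c) ∈ t.reverse.edges := by rw [hrev]; simp
      rwa [Walk.edges_reverse, List.mem_reverse] at this
    have h2 := hC.edges_nodup
    rw [Walk.edges_cons] at h2
    exact (List.nodup_cons.mp h2).1 h1
  · -- c' ∈ support
    have : c' ∈ t.reverse.support := by rw [hrev]; simp [Walk.support_cons]
    rw [Walk.support_reverse, List.mem_reverse] at this
    simp [Walk.support_cons, this]

end ThetaAux

namespace ThetaAux
variable {V : Type*} {G : SimpleGraph V}

theorem sym2_ne {v a b : V} (hab : a ≠ b) : s(v,a) ≠ s(v,b) := by
  intro h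
  rw [Sym2.eq_iff] at h
  rcases h with ⟨-, rfl⟩ | ⟨rfl, rfl⟩ <;> exact hab rfl

theorem edge_two_mem {e : Sym2 V} (he : e ∈ G.edgeSet) :
    ∃ x y : V, x ≠ y ∧ e = s(x,y) := by
  induction e using Sym2.ind with
  | _ x y => exact ⟨x, y, (G.mem_edgeSet.mp he).ne, rfl⟩

set_option maxHeartbeats 1000000 in
theorem divergent_cycle {v a b u' : V} (hva : G.Adj v a) (hvb : G.Adj v b) (hab : a ≠ b)
    (pa : G.Walk a u') (pb : G.Walk b u') (hpa : pa.IsPath) (hpb : pb.IsPath)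
    (hvpa : v ∉ pa.support) (hvpb : v ∉ pb.support) :
    ∃ K : G.Walk v v, K.IsCycle ∧ s(v, a) ∈ K.edges ∧ s(v, b) ∈ K.edges ∧
      (∀ x ∈ K.support, x = v ∨ x ∈ pa.support ∨ x ∈ pb.support) ∧
      (∀ e ∈ K.edges, v ∈ e → e = s(v, a) ∨ e = s(v, b)) ∧
      (a ∉ pb.support → s(a, pa.getVert 1) ∈ K.edges) := by
  classical
  obtain ⟨m, q₁, r, hsplit, hm, hq₁⟩ :=
    exists_firstHit {x | x ∈ pb.support} pa pb.end_mem_support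
  have hq₁path : q₁.IsPath := by
    rw [hsplit] at hpa; exact hpa.of_append_left
  set q₂ : G.Walk b m := pb.takeUntil m hm with hq₂def
  have hq₂path : q₂.IsPath := hpb.takeUntil hm
  have hq₁sub : ∀ x ∈ q₁.support, x ∈ pa.support := by
    intro x hx; rw [hsplit]; exact Walk.subset_support_append_left _ _ hx
  have hq₂sub : ∀ x ∈ q₂.support, x ∈ pb.support := fun x hx =>
    pb.support_takeUntil_subset hm hx
  have hvq₁ : v ∉ q₁.support := fun h => hvpa (hq₁sub v h)
  have hvq₂ : v ∉ q₂.support := fun h => hvpb (hq₂sub v h)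
  have hdisj : ∀ x ∈ q₁.support, x ∈ q₂.support → x = m := by
    intro x hx₁ hx₂
    by_contra hxm
    exact hq₁ x hx₁ hxm (hq₂sub x hx₂)
  set W₂ : G.Walk m v := (Walk.cons hvb q₂).reverse with hW₂
  set K : G.Walk v v := Walk.cons hva (q₁.append W₂) with hK
  -- supports
  have hW₂supp : W₂.support = q₂.support.reverse ++ [v] := by
    rw [hW₂, Walk.support_reverse, Walk.support_cons]; simp
  have hq₂rev : q₂.support.reverse = m :: q₂.support.reverse.tail := by
    have := Walk.support_eq_cons q₂.reverse
    rwa [Walk.support_reverse] at this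
  have hq₂revtail : ∀ x ∈ q₂.support.reverse.tail, x ∈ q₂.support ∧ x ≠ m := by
    intro x hx
    have hx' : x ∈ q₂.support := by
      have : x ∈ q₂.support.reverse := by rw [hq₂rev]; exact List.mem_cons_of_mem _ hx
      rwa [List.mem_reverse] at this
    refine ⟨hx', ?_⟩
    have hnd : q₂.support.reverse.Nodup := by
      rw [List.nodup_reverse]; exact hq₂path.support_nodup
    rw [hq₂rev] at hnd
    rintro rfl
    exact (List.nodup_cons.mp hnd).1 hx
  have hKsupp : K.support = v :: (q₁.support ++ (q₂.support.reverse.tail ++ [v])) := by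
    rw [hK, Walk.support_cons, Walk.support_append, hW₂supp, hq₂rev]
    simp
  -- edges
  have hKedges : K.edges = s(v,a) :: (q₁.edges ++ (q₂.edges.reverse ++ [s(v,b)])) := by
    rw [hK, Walk.edges_cons, Walk.edges_append, hW₂, Walk.edges_reverse, Walk.edges_cons]
    simp
  have hmemva : s(v,a) ∈ K.edges := by rw [hKedges]; simp
  have hmemvb : s(v,b) ∈ K.edges := by rw [hKedges]; simp
  have hedgecases : ∀ e ∈ K.edges, e = s(v,a) ∨ e ∈ q₁.edges ∨ e ∈ q₂.edges ∨ e = s(v,b) := by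
    intro e he; rw [hKedges] at he
    simp only [List.mem_cons, List.mem_append, List.mem_reverse, List.mem_singleton] at he
    tauto
  refine ⟨K, ?_, hmemva, hmemvb, ?_, ?_, ?_⟩
  · -- IsCycle
    constructor
    constructor
    · -- IsTrail : edges nodup
      constructor
      rw [hKedges]
      have hq₁e : q₁.edges.Nodup := hq₁path.isTrail.edges_nodup
      have hq₂e : q₂.edges.Nodup := hq₂path.isTrail.edges_nodup
      have hcross : ∀ e ∈ q₁.edges, e ∉ q₂.edges := by
        intro e he₁ he₂
        obtain ⟨x, y, hxy, rfl⟩ := edge_two_mem (Walk.edges_subset_edgeSet q₁ he₁)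
        have hx : x = m := hdisj x (q₁.fst_mem_support_of_mem_edges he₁)
          (q₂.fst_mem_support_of_mem_edges he₂)
        have hy : y = m := hdisj y (q₁.snd_mem_support_of_mem_edges he₁)
          (q₂.snd_mem_support_of_mem_edges he₂)
        exact hxy (hx.trans hy.symm)
      have hva₁ : s(v,a) ∉ q₁.edges := fun h =>
        not_mem_edge_of_not_mem_support hvq₁ h (Sym2.mem_mk_left v a)
      have hva₂ : s(v,a) ∉ q₂.edges := fun h =>
        not_mem_edge_of_not_mem_support hvq₂ h (Sym2.mem_mk_left v a)
      have hvb₁ : s(v,b) ∉ q₁.edges := fun h =>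
        not_mem_edge_of_not_mem_support hvq₁ h (Sym2.mem_mk_left v b)
      have hvb₂ : s(v,b) ∉ q₂.edges := fun h =>
        not_mem_edge_of_not_mem_support hvq₂ h (Sym2.mem_mk_left v b)
      rw [List.nodup_cons]
      constructor
      · simp only [List.mem_append, List.mem_reverse, List.mem_singleton]
        rintro (h | h | h)
        · exact hva₁ h
        · exact hva₂ h
        · exact sym2_ne hab h
      · rw [List.nodup_append]
        refine ⟨hq₁e, ?_, ?_⟩
        · rw [List.nodup_append]
          refine ⟨List.nodup_reverse.mpr hq₂e, List.nodup_singleton _, ?_⟩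
          intro e he₁ e' he₂ hee
          rw [List.mem_reverse] at he₁
          rw [List.mem_singleton] at he₂
          subst he₂ hee; exact hvb₂ he₁
        · intro e he₁ e' he₂ hee
          rw [← hee] at he₂
          simp only [List.mem_append, List.mem_reverse, List.mem_singleton] at he₂
          rcases he₂ with h | h
          · exact hcross e he₁ h
          · subst h; exact hvb₁ he₁
    · -- ne_nil
      rw [hK]; exact fun h => by simp at h
    · -- support tail nodup
      rw [hKsupp]
      simp only [List.tail_cons]
      have h1 : q₁.support.Nodup := hq₁path.support_nodup
      have h2 : q₂.support.reverse.tail.Nodup :=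
        (List.nodup_reverse.mpr hq₂path.support_nodup).tail
      rw [List.nodup_append]
      refine ⟨h1, ?_, ?_⟩
      · rw [List.nodup_append]
        refine ⟨h2, List.nodup_singleton _, ?_⟩
        intro x hx y hx' hxy
        rw [List.mem_singleton] at hx'
        subst hx'
        rw [hxy] at hx
        exact hvq₂ (hq₂revtail _ hx).1
      · intro x hx₁ y hx₂ hxy
        rw [← hxy] at hx₂
        simp only [List.mem_append, List.mem_singleton] at hx₂
        rcases hx₂ with h | h
        · obtain ⟨hxq₂, hxm⟩ := hq₂revtail _ h
          exact hxm (hdisj x hx₁ hxq₂)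
        · subst h; exact hvq₁ hx₁
  · -- support characterization
    intro x hx
    rw [hKsupp] at hx
    simp only [List.mem_cons, List.mem_append, List.mem_singleton, List.not_mem_nil,
      or_false] at hx
    rcases hx with rfl | h | h | rfl
    · exact Or.inl rfl
    · exact Or.inr (Or.inl (hq₁sub x h))
    · exact Or.inr (Or.inr (hq₂sub x (hq₂revtail x h).1))
    · exact Or.inl rfl
  · -- edges at v
    intro e he hve
    rcases hedgecases e he with rfl | h | h | rfl
    · exact Or.inl rfl
    · exact absurd hve (not_mem_edge_of_not_mem_support hvq₁ h)
    · exact absurd hve (not_mem_edge_of_not_mem_support hvq₂ h)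
    · exact Or.inr rfl
  · -- first edge of pa
    intro hapb
    have hmne : m ≠ a := fun h => hapb (h ▸ hm)
    have hq₁nn : ¬ q₁.Nil := by
      intro h
      rw [Walk.nil_iff_length_eq] at h
      exact hmne (Walk.eq_of_length_eq_zero (p := q₁) h).symm
    have h1 : s(a, q₁.getVert 1) ∈ q₁.edges := firstEdge_mem hq₁nn
    have h2 : pa.getVert 1 = q₁.getVert 1 := by
      rw [hsplit, Walk.getVert_append]
      rcases Nat.lt_or_ge 1 q₁.length with hlt | hge
      · simp [hlt]
      · have hq₁len : q₁.length = 1 := by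
          have h0 : q₁.length ≠ 0 := fun h => hq₁nn (Walk.nil_iff_length_eq.mpr h)
          omega
        rw [if_neg (by omega)]
        rw [hq₁len]
        simp [Walk.getVert_zero, Walk.getVert_of_length_le q₁ hq₁len.le]
    rw [h2]
    rw [hKedges]
    simp only [List.mem_cons, List.mem_append]
    right; left; exact h1
end ThetaAux

namespace ThetaAux
variable {V : Type*} {G : SimpleGraph V}

variable [DecidableEq V]

theorem mem_support_closed_iff_tail {w : V} {p : G.Walk w w} (hp : ¬ p.Nil) {x : V} :
    x ∈ p.support ↔ x ∈ p.support.tail := by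
  constructor
  · intro hx
    rw [Walk.support_eq_cons] at hx
    rcases List.mem_cons.mp hx with rfl | h
    · exact end_mem_tail_support hp
    · exact h
  · intro hx
    rw [Walk.support_eq_cons]
    exact List.mem_cons_of_mem _ hx

theorem mem_support_rotate {w x y : V} {c : G.Walk w w} (hc : ¬ c.Nil) (h : x ∈ c.support) :
    y ∈ (c.rotate x h).support ↔ y ∈ c.support := by
  have hnil : ¬ (c.rotate x h).Nil := by
    have hlen : (c.rotate x h).length = c.length := by
      rw [← Walk.length_edges, ← Walk.length_edges]
      exact (Walk.rotate_edges c x h).perm.length_eq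
    rw [Walk.nil_iff_length_eq, hlen]
    rw [Walk.nil_iff_length_eq] at hc
    exact hc
  rw [mem_support_closed_iff_tail hnil, mem_support_closed_iff_tail hc]
  exact (Walk.support_rotate c x h).mem_iff

theorem cycle_split {a b : V} {C : G.Walk a a} (hC : C.IsCycle) (hb : b ∈ C.support)
    (hab : a ≠ b) :
    ∃ (q₁ : G.Walk a b) (q₂ : G.Walk b a),
      q₁.IsPath ∧ q₂.IsPath ∧
      (∀ x ∈ q₁.support, x ∈ q₂.support → x = a ∨ x = b) ∧
      List.Disjoint q₁.edges q₂.edges ∧ q₁.edges ≠ [] ∧ q₂.edges ≠ [] ∧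
      (∀ x ∈ q₁.support, x ∈ C.support) ∧ (∀ x ∈ q₂.support, x ∈ C.support) ∧
      (∀ e ∈ q₁.edges, e ∈ C.edges) ∧ (∀ e ∈ q₂.edges, e ∈ C.edges) := by
  have hspec := C.take_spec hb
  set q₁ : G.Walk a b := C.takeUntil b hb with hq₁def
  set q₂ : G.Walk b a := C.dropUntil b hb with hq₂def
  have hsup : C.support = q₁.support ++ q₂.support.tail := by
    conv_lhs => rw [← hspec]
    rw [Walk.support_append]
  have htail : C.support.tail = q₁.support.tail ++ q₂.support.tail := by
    have h1 : C.support = a :: C.support.tail := Walk.support_eq_cons C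
    have h2 : q₁.support = a :: q₁.support.tail := Walk.support_eq_cons q₁
    rw [h1, h2] at hsup
    simpa only [List.cons_append, List.cons.injEq, true_and] using hsup
  have tnd : (q₁.support.tail ++ q₂.support.tail).Nodup := htail ▸ hC.support_nodup
  obtain ⟨nd₁, nd₂, dj⟩ := List.nodup_append.mp tnd
  have hq₁nn : ¬ q₁.Nil := fun h =>
    hab (Walk.eq_of_length_eq_zero (p := q₁) (Walk.nil_iff_length_eq.mp h))
  have hq₂nn : ¬ q₂.Nil := fun h =>
    hab (Walk.eq_of_length_eq_zero (p := q₂) (Walk.nil_iff_length_eq.mp h)).symm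
  have hbq₁ : b ∈ q₁.support.tail := end_mem_tail_support hq₁nn
  have haq₂ : a ∈ q₂.support.tail := end_mem_tail_support hq₂nn
  have hq₁path : q₁.IsPath := by
    apply Walk.IsPath.mk'
    rw [Walk.support_eq_cons]
    exact List.nodup_cons.mpr ⟨fun h => dj _ h _ haq₂ rfl, nd₁⟩
  have hq₂path : q₂.IsPath := by
    apply Walk.IsPath.mk'
    rw [Walk.support_eq_cons]
    exact List.nodup_cons.mpr ⟨fun h => dj _ hbq₁ _ h rfl, nd₂⟩
  have hedges : C.edges = q₁.edges ++ q₂.edges := by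
    conv_lhs => rw [← hspec]
    rw [Walk.edges_append]
  have hend : (q₁.edges ++ q₂.edges).Nodup := hedges ▸ hC.edges_nodup
  refine ⟨q₁, q₂, hq₁path, hq₂path, ?_, List.disjoint_of_nodup_append hend, ?_, ?_, ?_, ?_, ?_, ?_⟩
  · intro x hx₁ hx₂
    rw [Walk.support_eq_cons] at hx₁ hx₂
    rcases List.mem_cons.mp hx₁ with rfl | h₁
    · exact Or.inl rfl
    · rcases List.mem_cons.mp hx₂ with rfl | h₂
      · exact Or.inr rfl
      · exact absurd (dj _ h₁ _ h₂ rfl) (fun h => h)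
  · intro h
    have : q₁.length = 0 := by
      have := congrArg List.length h
      simpa [Walk.length_edges] using this
    exact hq₁nn (Walk.nil_iff_length_eq.mpr this)
  · intro h
    have : q₂.length = 0 := by
      have := congrArg List.length h
      simpa [Walk.length_edges] using this
    exact hq₂nn (Walk.nil_iff_length_eq.mpr this)
  · exact fun x hx => C.support_takeUntil_subset hb hx
  · exact fun x hx => C.support_dropUntil_subset hb hx
  · exact fun e he => C.edges_takeUntil_subset hb he
  · exact fun e he => C.edges_dropUntil_subset hb he

end ThetaAux

namespace ThetaAux
variable {V : Type*} {G : SimpleGraph V} [DecidableEq V]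

theorem ear_theta {r₀ : V} {C : G.Walk r₀ r₀} (hC : C.IsCycle) {a b : V} (ha : a ∈ C.support)
    (hb : b ∈ C.support) (hab : a ≠ b) {q : G.Walk a b} (hq : q.IsPath)
    (hint : ∀ x ∈ q.support, x ≠ a → x ≠ b → x ∉ C.support)
    (he : ∃ e ∈ q.edges, e ∉ C.edges) :
    ∃ (p₁ p₂ : G.Walk a b), IsTheta G a b p₁ p₂ q ∧
      (∀ x ∈ p₁.support, x ∈ C.support) ∧ (∀ x ∈ p₂.support, x ∈ C.support) := by
  set C' : G.Walk a a := C.rotate a ha with hC'def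
  have hC' : C'.IsCycle := hC.rotate ha
  have hmem : ∀ y : V, y ∈ C'.support ↔ y ∈ C.support :=
    fun y => mem_support_rotate hC.not_nil ha
  have hedgesrot : ∀ e, e ∈ C'.edges ↔ e ∈ C.edges := fun e => (Walk.rotate_edges C a ha).mem_iff
  have hb' : b ∈ C'.support := (hmem b).mpr hb
  obtain ⟨q₁, q₂, hq₁p, hq₂p, hq₁₂, hdj, hq₁ne, hq₂ne, hq₁s, hq₂s, hq₁e, hq₂e⟩ :=
    cycle_split hC' hb' hab
  obtain ⟨e₀, he₀q, he₀C⟩ := he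
  refine ⟨q₁, q₂.reverse, ⟨hab, hq₁p, hq₂p.reverse, hq, ?_, ?_, ?_, ?_, ?_, ?_⟩, ?_, ?_⟩
  · -- q₁ ≠ q₂.reverse
    intro hEq
    obtain ⟨e₁, he₁⟩ := List.exists_mem_of_ne_nil _ hq₁ne
    have : e₁ ∈ q₂.reverse.edges := hEq ▸ he₁
    rw [Walk.edges_reverse, List.mem_reverse] at this
    exact hdj he₁ this
  · -- q₁ ≠ q
    intro hEq
    exact he₀C ((hedgesrot e₀).mp (hq₁e e₀ (hEq ▸ he₀q)))
  · -- q₂.reverse ≠ q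
    intro hEq
    have : e₀ ∈ q₂.reverse.edges := hEq ▸ he₀q
    rw [Walk.edges_reverse, List.mem_reverse] at this
    exact he₀C ((hedgesrot e₀).mp (hq₂e e₀ this))
  · -- support q₁ vs q₂.reverse
    intro x hx₁ hx₂
    rw [Walk.support_reverse, List.mem_reverse] at hx₂
    exact hq₁₂ x hx₁ hx₂
  · -- support q₁ vs q
    intro x hx₁ hx₂
    by_contra hcon
    push_neg at hcon
    exact hint x hx₂ hcon.1 hcon.2 ((hmem x).mp (hq₁s x hx₁))
  · -- support q₂.reverse vs q
    intro x hx₁ hx₂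
    rw [Walk.support_reverse, List.mem_reverse] at hx₁
    by_contra hcon
    push_neg at hcon
    have : x ∈ C.support := (hmem x).mp (hq₂s x hx₁)
    rcases hcon with ⟨h1, h2⟩
    exact hint x hx₂ h1 h2 this
  · exact fun x hx => (hmem x).mp (hq₁s x hx)
  · intro x hx
    rw [Walk.support_reverse, List.mem_reverse] at hx
    exact (hmem x).mp (hq₂s x hx)

end ThetaAux

namespace ThetaAux
variable {V : Type*} {G : SimpleGraph V} [DecidableEq V]

/-- the ambient "no theta within Bp" hypothesis -/
def NoTheta (G : SimpleGraph V) (Bp : V → Prop) : Prop :=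
  ∀ (a b : V) (p₁ p₂ p₃ : G.Walk a b), IsTheta G a b p₁ p₂ p₃ →
    (∀ x : V, (x ∈ p₁.support ∨ x ∈ p₂.support ∨ x ∈ p₃.support) → Bp x) → False

theorem single_edge_isPath {c d : V} (h : G.Adj c d) : (h.toWalk).IsPath := by
  rw [Walk.cons_isPath_iff]
  exact ⟨Walk.IsPath.nil, by simp [h.ne]⟩

theorem loop_no_cycle [Fintype V] [DecidableRel G.Adj] {x₂ a : V}
    (hdeg : G.degree a ≤ 3) {C₂ : G.Walk x₂ x₂} (hC₂ : C₂.IsCycle) (ha : a ∈ C₂.support)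
    {K : G.Walk a a} (hK : K.IsCycle)
    (hdisjK : ∀ x ∈ K.support, x ≠ a → x ∉ C₂.support) : False := by
  obtain ⟨c, c', hcc', hc, hc', hcs, hc's⟩ := cycle_neighbors hK
  have hcS : c ∉ C₂.support := hdisjK c hcs hc.ne'
  have hc'S : c' ∉ C₂.support := hdisjK c' hc's hc'.ne'
  obtain ⟨n₁, n₂, hnn, hn₁, hn₂, hn₁s, hn₂s⟩ := cycle_neighbors (hC₂.rotate ha)
  have hn₁C : n₁ ∈ C₂.support := (mem_support_rotate hC₂.not_nil ha).mp hn₁s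
  have hn₂C : n₂ ∈ C₂.support := (mem_support_rotate hC₂.not_nil ha).mp hn₂s
  have hsub : ({c, c', n₁, n₂} : Finset V) ⊆ G.neighborFinset a := by
    intro x hx
    simp only [Finset.mem_insert, Finset.mem_singleton] at hx
    rw [SimpleGraph.mem_neighborFinset]
    rcases hx with rfl | rfl | rfl | rfl
    · exact hc
    · exact hc'
    · exact hn₁
    · exact hn₂
  have hcn₁ : c ≠ n₁ := fun h => hcS (h ▸ hn₁C)
  have hcn₂ : c ≠ n₂ := fun h => hcS (h ▸ hn₂C)
  have hc'n₁ : c' ≠ n₁ := fun h => hc'S (h ▸ hn₁C)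
  have hc'n₂ : c' ≠ n₂ := fun h => hc'S (h ▸ hn₂C)
  have hcard : ({c, c', n₁, n₂} : Finset V).card = 4 := by
    rw [Finset.card_insert_of_notMem (by simp [hcc', hcn₁, hcn₂]),
      Finset.card_insert_of_notMem (by simp [hc'n₁, hc'n₂]),
      Finset.card_insert_of_notMem (by simp [hnn]), Finset.card_singleton]
  have := Finset.card_le_card hsub
  rw [hcard] at this
  rw [← SimpleGraph.card_neighborFinset_eq_degree] at hdeg
  omega

theorem no_cross [Fintype V] [DecidableRel G.Adj] {Bp : V → Prop}
    (HT : NoTheta G Bp) {x₂ : V} {C₂ : G.Walk x₂ x₂} (hC₂ : C₂.IsCycle)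
    (hB₂ : ∀ x ∈ C₂.support, Bp x) :
    ∀ {c d : V} (p : G.Walk c d), p.IsPath → (∀ x ∈ p.support, Bp x) →
      c ∈ C₂.support → d ∈ C₂.support → (∃ e ∈ p.edges, e ∉ C₂.edges) → False := by
  intro c d p
  induction p with
  | nil =>
    intro _ _ _ _ he
    simp at he
  | @cons c c₁ d h p₁ ih =>
    intro hp hB hc hd he
    by_cases h₁ : c₁ ∈ C₂.support
    · by_cases h₂ : s(c, c₁) ∈ C₂.edges
      · refine ih hp.of_cons (fun x hx => hB x (by simp [Walk.support_cons, hx])) h₁ hd ?_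
        obtain ⟨e, heq, heC⟩ := he
        rw [Walk.edges_cons, List.mem_cons] at heq
        rcases heq with rfl | hmem
        · exact absurd h₂ heC
        · exact ⟨e, hmem, heC⟩
      · obtain ⟨P₁, P₂, hTh, hs₁, hs₂⟩ := ear_theta hC₂ hc h₁ h.ne (single_edge_isPath h)
          (by intro x hx hxc hxc₁; simp [Walk.support_cons] at hx; tauto)
          ⟨s(c, c₁), by simp, h₂⟩
        refine HT _ _ P₁ P₂ _ hTh ?_
        intro x hx
        rcases hx with hx | hx | hx
        · exact hB₂ x (hs₁ x hx)
        · exact hB₂ x (hs₂ x hx)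
        · simp [Walk.support_cons] at hx
          rcases hx with rfl | rfl
          · exact hB x (by simp)
          · exact hB x (by simp [Walk.support_cons])
    · obtain ⟨m, q', r, hsplit, hm, hqp⟩ :=
        exists_firstHit {x | x ∈ C₂.support} p₁ hd
      have hq'path : q'.IsPath := by
        have := hp.of_cons
        rw [hsplit] at this
        exact this.of_append_left
      have hcq' : c ∉ q'.support := by
        intro hmem
        have : c ∈ p₁.support := by
          rw [hsplit]; exact Walk.subset_support_append_left _ _ hmem
        exact (Walk.cons_isPath_iff h p₁).mp hp |>.2 this
      have hcm : c ≠ m := by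
        rintro rfl
        exact hcq' (by rw [hsplit] at *; exact q'.end_mem_support) <;> skip
      set q : G.Walk c m := Walk.cons h q' with hqdef
      have hqpath : q.IsPath := (Walk.cons_isPath_iff h q').mpr ⟨hq'path, hcq'⟩
      obtain ⟨P₁, P₂, hTh, hs₁, hs₂⟩ := ear_theta hC₂ hc hm hcm hqpath
        (by
          intro x hx hxc hxm
          rw [hqdef, Walk.support_cons, List.mem_cons] at hx
          rcases hx with rfl | hx
          · exact absurd rfl hxc
          · exact hqp x hx hxm)
        ⟨s(c, c₁), by simp [hqdef], fun hmem => h₁ (Walk.snd_mem_support_of_mem_edges C₂ hmem)⟩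
      refine HT _ _ P₁ P₂ _ hTh ?_
      intro x hx
      rcases hx with hx | hx | hx
      · exact hB₂ x (hs₁ x hx)
      · exact hB₂ x (hs₂ x hx)
      · rw [hqdef, Walk.support_cons, List.mem_cons] at hx
        rcases hx with rfl | hx
        · exact hB x (by simp)
        · refine hB x ?_
          rw [Walk.support_cons, List.mem_cons]
          right
          rw [hsplit]
          exact Walk.subset_support_append_left _ _ hx

theorem cycles_meet [Fintype V] [DecidableRel G.Adj] {Bp : V → Prop}
    (HT : NoTheta G Bp) (hdeg : ∀ v : V, G.degree v ≤ 3) {x₁ x₂ x₀ : V}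
    {K₁ : G.Walk x₁ x₁} {K₂ : G.Walk x₂ x₂} (h₁ : K₁.IsCycle) (h₂ : K₂.IsCycle)
    (hB₁ : ∀ x ∈ K₁.support, Bp x) (hB₂ : ∀ x ∈ K₂.support, Bp x)
    (hx₀₁ : x₀ ∈ K₁.support) (hx₀₂ : x₀ ∈ K₂.support)
    {e : Sym2 V} (he₁ : e ∈ K₁.edges) (he₂ : e ∉ K₂.edges) : False := by
  set K : G.Walk x₀ x₀ := K₁.rotate x₀ hx₀₁ with hKdef
  have hK : K.IsCycle := h₁.rotate hx₀₁
  have hKsup : ∀ y, y ∈ K.support ↔ y ∈ K₁.support :=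
    fun y => mem_support_rotate h₁.not_nil hx₀₁
  have hKB : ∀ x ∈ K.support, Bp x := fun x hx => hB₁ x ((hKsup x).mp hx)
  have heK : e ∈ K.edges := (Walk.rotate_edges K₁ x₀ hx₀₁).mem_iff.mpr he₁
  clear_value K
  clear hKdef he₁
  obtain ⟨c, h, tail, rfl⟩ := Walk.not_nil_iff.mp hK.not_nil
  have htailpath : tail.IsPath := by
    apply Walk.IsPath.mk'
    have := hK.support_nodup
    rwa [Walk.support_cons, List.tail_cons] at this
  have htailB : ∀ x ∈ tail.support, Bp x :=
    fun x hx => hKB x (by rw [Walk.support_cons]; exact List.mem_cons_of_mem _ hx)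
  by_cases hcS : c ∈ K₂.support
  · by_cases hce : s(x₀, c) ∈ K₂.edges
    · refine no_cross HT h₂ hB₂ tail htailpath htailB hcS hx₀₂ ⟨e, ?_, he₂⟩
      rw [Walk.edges_cons, List.mem_cons] at heK
      rcases heK with rfl | hmem
      · exact absurd hce he₂
      · exact hmem
    · obtain ⟨P₁, P₂, hTh, hs₁, hs₂⟩ := ear_theta h₂ hx₀₂ hcS h.ne (single_edge_isPath h)
        (by intro x hx hx₀ hxc; simp [Walk.support_cons] at hx; tauto) ⟨s(x₀, c), by simp, hce⟩
      refine HT _ _ P₁ P₂ _ hTh ?_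
      intro x hx
      rcases hx with hx | hx | hx
      · exact hB₂ x (hs₁ x hx)
      · exact hB₂ x (hs₂ x hx)
      · simp only [Walk.support_cons, Walk.support_nil, List.mem_cons, List.mem_singleton,
          List.not_mem_nil, or_false] at hx
        rcases hx with rfl | rfl
        · exact hKB x (by simp)
        · exact hKB x (by simp [Walk.support_cons])
  · obtain ⟨m, q', r, hsplit, hm, hqp⟩ := exists_firstHit {x | x ∈ K₂.support} tail hx₀₂
    by_cases hmx₀ : m = x₀
    · subst hmx₀
      -- loop case : r must be nil, K meets K₂ only in m = x₀
      refine loop_no_cycle (hdeg m) h₂ hx₀₂ hK ?_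
      intro x hx hxm
      rw [Walk.support_cons, List.mem_cons] at hx
      rcases hx with rfl | hx
      · exact absurd rfl hxm
      · -- x ∈ tail.support
        have hrnil : r.Nil := by
          by_contra hrn
          have h1 : m ∈ q'.support := q'.end_mem_support
          have h2 : m ∈ r.support.tail := end_mem_tail_support hrn
          have : ¬ tail.support.Nodup := by
            rw [hsplit, Walk.support_append]
            intro hnd
            obtain ⟨-, -, hdj⟩ := List.nodup_append.mp hnd
            exact hdj _ h1 _ h2 rfl
          exact this htailpath.support_nodup
        have hx' : x ∈ q'.support := by
          rw [hsplit, Walk.mem_support_append_iff] at hx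
          rcases hx with hx | hx
          · exact hx
          · -- x ∈ r.support where r is nil-like (from m to m with Nil)
            exfalso
            rw [Walk.nil_iff_length_eq] at hrnil
            have : x = m := by
              have := Walk.mem_support_iff_exists_getVert.mp hx
              obtain ⟨i, hxi, hil⟩ := this
              rw [hrnil] at hil
              interval_cases i
              · rw [Walk.getVert_zero] at hxi; exact hxi.symm
            exact hxm this
        exact hqp x hx' hxm
    · -- proper ear from x₀ to m through c
      have hx₀q' : x₀ ∉ q'.support := by
        intro hmem
        exact hqp x₀ hmem (fun h => hmx₀ h.symm) hx₀₂
      have hq'path : q'.IsPath := by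
        have := htailpath
        rw [hsplit] at this
        exact this.of_append_left
      set q : G.Walk x₀ m := Walk.cons h q' with hqdef
      have hqpath : q.IsPath := (Walk.cons_isPath_iff h q').mpr ⟨hq'path, hx₀q'⟩
      obtain ⟨P₁, P₂, hTh, hs₁, hs₂⟩ := ear_theta h₂ hx₀₂ hm (fun h => hmx₀ h.symm) hqpath
        (by
          intro x hx hx₀x hxm
          rw [hqdef, Walk.support_cons, List.mem_cons] at hx
          rcases hx with rfl | hx
          · exact absurd rfl hx₀x
          · exact hqp x hx hxm)
        ⟨s(x₀, c), by simp [hqdef], fun hmem => hcS (Walk.snd_mem_support_of_mem_edges K₂ hmem)⟩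
      refine HT _ _ P₁ P₂ _ hTh ?_
      intro x hx
      rcases hx with hx | hx | hx
      · exact hB₂ x (hs₁ x hx)
      · exact hB₂ x (hs₂ x hx)
      · rw [hqdef, Walk.support_cons, List.mem_cons] at hx
        rcases hx with rfl | hx
        · exact hKB x (by simp)
        · refine htailB x ?_
          rw [hsplit]
          exact Walk.subset_support_append_left _ _ hx

end ThetaAux

namespace ThetaAux
variable {V : Type*} {G : SimpleGraph V} [DecidableEq V]

theorem exists_desc {u v : V} (hr : G.Reachable u v) :
    ∃ p : G.Walk v u, p.IsPath ∧ p.length = G.dist u v ∧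
      ∀ x ∈ p.support, G.Reachable u x ∧ G.dist u x ≤ G.dist u v ∧
        (x ≠ v → G.dist u x < G.dist u v) := by
  obtain ⟨w, hw⟩ := hr.exists_walk_length_eq_dist
  have hlb : G.dist u v ≤ w.bypass.length := SimpleGraph.dist_le _
  have hub : w.bypass.length ≤ w.length := Walk.length_bypass_le w
  have hlen : w.bypass.length = G.dist u v := by omega
  refine ⟨w.bypass.reverse, (Walk.bypass_isPath w).reverse, by simp [hlen], ?_⟩
  intro x hx
  rw [Walk.support_reverse, List.mem_reverse] at hx
  obtain ⟨w₁, w₂, hsplit⟩ := Walk.mem_support_iff_exists_append.mp hx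
  have hladd : w₁.length + w₂.length = G.dist u v := by
    rw [← hlen, hsplit, Walk.length_append]
  have hr1 : G.Reachable u x := ⟨w₁⟩
  have hd1 : G.dist u x ≤ w₁.length := SimpleGraph.dist_le _
  refine ⟨hr1, by omega, ?_⟩
  intro hxv
  have : w₂.length ≠ 0 := fun h0 => hxv (Walk.eq_of_length_eq_zero (p := w₂) h0)
  omega

theorem desc_cons {u v : V} {p : G.Walk v u} (hlen : p.length = G.dist u v)
    (hr : G.Reachable u v) (hpos : 0 < G.dist u v) :
    ∃ (c : V) (h : G.Adj v c) (p' : G.Walk c u),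
      p = Walk.cons h p' ∧ G.dist u c + 1 = G.dist u v := by
  cases p with
  | nil => rw [← hlen] at hpos; simp at hpos
  | @cons v c u h p' =>
    refine ⟨c, h, p', rfl, ?_⟩
    have h1 : G.dist u c ≤ p'.length := by
      rw [SimpleGraph.dist_comm]; exact SimpleGraph.dist_le p'
    have h2 : p'.length + 1 = G.dist u v := by
      rw [← hlen]; simp [Walk.length_cons]
    -- also dist u v ≤ dist u c + 1
    have hrc : G.Reachable u c := hr.trans ⟨h.toWalk⟩
    obtain ⟨wc, hwc⟩ := hrc.exists_walk_length_eq_dist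
    have h3 : G.dist u v ≤ G.dist u c + 1 := by
      have := SimpleGraph.dist_le (wc.append h.symm.toWalk)
      rwa [Walk.length_append, hwc] at this
    omega

theorem reachable_adj {u v w : V} (hr : G.Reachable u v) (h : G.Adj v w) :
    G.Reachable u w := hr.trans ⟨h.toWalk⟩

theorem dist_adj_le {u v w : V} (hr : G.Reachable u v) (h : G.Adj v w) :
    G.dist u w ≤ G.dist u v + 1 := by
  obtain ⟨wc, hwc⟩ := hr.exists_walk_length_eq_dist
  have := SimpleGraph.dist_le (wc.append h.toWalk)
  rwa [Walk.length_append, hwc] at this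

theorem dist_adj_ge {u v w : V} (hr : G.Reachable u v) (h : G.Adj v w) :
    G.dist u v ≤ G.dist u w + 1 :=
  dist_adj_le (reachable_adj hr h) h.symm

set_option maxHeartbeats 1000000 in
/-- Build a cycle through `v` from two neighbours whose distance from `u` does not exceed
that of `v`. -/
theorem build_cycle {u v a b : V} (hva : G.Adj v a) (hvb : G.Adj v b) (hab : a ≠ b)
    (hra : G.Reachable u a) (hrb : G.Reachable u b)
    (hda : G.dist u a ≤ G.dist u v) (hdb : G.dist u b ≤ G.dist u v) :
    ∃ K : G.Walk v v, K.IsCycle ∧ s(v, a) ∈ K.edges ∧ s(v, b) ∈ K.edges ∧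
      (∀ x ∈ K.support, x = v ∨ (G.Reachable u x ∧
        G.dist u x ≤ max (G.dist u a) (G.dist u b))) ∧
      (∀ e ∈ K.edges, v ∈ e → e = s(v, a) ∨ e = s(v, b)) ∧
      (G.dist u b ≤ G.dist u a → 1 ≤ G.dist u a →
        ∃ c : V, G.Adj a c ∧ G.dist u c + 1 = G.dist u a ∧ s(a, c) ∈ K.edges) := by
  obtain ⟨pa, hpa, hpalen, hpasup⟩ := exists_desc hra
  obtain ⟨pb, hpb, hpblen, hpbsup⟩ := exists_desc hrb
  have hvpa : v ∉ pa.support := by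
    intro hmem
    obtain ⟨-, h1, h2⟩ := hpasup v hmem
    by_cases hveq : v = a
    · exact hva.ne hveq
    · have := h2 hveq; omega
  have hvpb : v ∉ pb.support := by
    intro hmem
    obtain ⟨-, h1, h2⟩ := hpbsup v hmem
    by_cases hveq : v = b
    · exact hvb.ne hveq
    · have := h2 hveq; omega
  obtain ⟨K, hK, hea, heb, hsup, hedge, hfirst⟩ :=
    divergent_cycle hva hvb hab pa pb hpa hpb hvpa hvpb
  refine ⟨K, hK, hea, heb, ?_, hedge, ?_⟩
  · intro x hx
    rcases hsup x hx with rfl | hx | hx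
    · exact Or.inl rfl
    · obtain ⟨hr, hle, -⟩ := hpasup x hx
      exact Or.inr ⟨hr, le_trans hle (le_max_left _ _)⟩
    · obtain ⟨hr, hle, -⟩ := hpbsup x hx
      exact Or.inr ⟨hr, le_trans hle (le_max_right _ _)⟩
  · intro hba h1a
    have hanotpb : a ∉ pb.support := by
      intro hmem
      obtain ⟨-, h1, h2⟩ := hpbsup a hmem
      have := h2 (fun h => hab h)
      omega
    obtain ⟨c, hc, p', hp'eq, hcd⟩ := desc_cons hpalen hra (by omega)
    refine ⟨c, hc, hcd, ?_⟩
    have := hfirst hanotpb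
    rw [hp'eq] at this
    simpa [Walk.getVert_cons] using this

end ThetaAux

namespace ThetaAux
variable {V : Type*} [Fintype V] [DecidableEq V] {G : SimpleGraph V} [DecidableRel G.Adj]

/-- ball predicate -/
def Ball (G : SimpleGraph V) (u : V) (N : ℕ) : V → Prop :=
  fun v => G.Reachable u v ∧ G.dist u v ≤ N

/-- down-neighbours (one closer to `u`) -/
noncomputable def dwn (G : SimpleGraph V) [DecidableRel G.Adj] (u v : V) : Finset V :=
  (G.neighborFinset v).filter (fun w => G.dist u w + 1 = G.dist u v)

/-- up-neighbours -/
noncomputable def upn (G : SimpleGraph V) [DecidableRel G.Adj] (u v : V) : Finset V :=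
  (G.neighborFinset v).filter (fun w => G.dist u w = G.dist u v + 1)

/-- flat neighbours -/
noncomputable def fln (G : SimpleGraph V) [DecidableRel G.Adj] (u v : V) : Finset V :=
  (G.neighborFinset v).filter (fun w => G.dist u w = G.dist u v)

/-- private children: up-neighbours whose only down-neighbour is `v` -/
noncomputable def privs (G : SimpleGraph V) [DecidableRel G.Adj] (u v : V) : Finset V :=
  (upn G u v).filter (fun y => dwn G u y = {v})

theorem neighbor_split {u v : V} (hr : G.Reachable u v) :
    G.neighborFinset v = dwn G u v ∪ fln G u v ∪ upn G u v := by
  ext w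
  simp only [Finset.mem_union, dwn, fln, upn, Finset.mem_filter]
  constructor
  · intro hw
    have hadj : G.Adj v w := (SimpleGraph.mem_neighborFinset G v w).mp hw
    have h1 := dist_adj_le hr hadj
    have h2 := dist_adj_ge hr hadj
    refine ?_
    rcases Nat.lt_trichotomy (G.dist u w) (G.dist u v) with h | h | h
    · exact Or.inl (Or.inl ⟨hw, by omega⟩)
    · exact Or.inl (Or.inr ⟨hw, h⟩)
    · exact Or.inr ⟨hw, by omega⟩
  · rintro ((⟨h, -⟩ | ⟨h, -⟩) | ⟨h, -⟩) <;> exact h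

theorem neighbor_card_split {u v : V} (hr : G.Reachable u v) :
    (dwn G u v).card + (fln G u v).card + (upn G u v).card = G.degree v := by
  have hd1 : Disjoint (dwn G u v) (fln G u v) := by
    rw [Finset.disjoint_left]
    intro w h1 h2
    simp only [dwn, fln, Finset.mem_filter] at h1 h2
    omega
  have hd2 : Disjoint (dwn G u v ∪ fln G u v) (upn G u v) := by
    rw [Finset.disjoint_left]
    intro w h1 h2
    simp only [dwn, fln, upn, Finset.mem_union, Finset.mem_filter] at h1 h2
    rcases h1 with h1 | h1 <;> omega
  rw [← SimpleGraph.card_neighborFinset_eq_degree, neighbor_split hr,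
    Finset.card_union_of_disjoint hd2, Finset.card_union_of_disjoint hd1]

theorem dwn_nonempty {u v : V} (hr : G.Reachable u v) (h1 : 1 ≤ G.dist u v) :
    (dwn G u v).Nonempty := by
  obtain ⟨p, hp, hlen, -⟩ := exists_desc hr
  obtain ⟨c, hc, p', -, hcd⟩ := desc_cons hlen hr (by omega)
  refine ⟨c, ?_⟩
  simp only [dwn, Finset.mem_filter, SimpleGraph.mem_neighborFinset]
  exact ⟨hc, hcd⟩

theorem mem_dwn {u v w : V} : w ∈ dwn G u v ↔ G.Adj v w ∧ G.dist u w + 1 = G.dist u v := by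
  simp [dwn, Finset.mem_filter, SimpleGraph.mem_neighborFinset]

theorem mem_upn {u v w : V} : w ∈ upn G u v ↔ G.Adj v w ∧ G.dist u w = G.dist u v + 1 := by
  simp [upn, Finset.mem_filter, SimpleGraph.mem_neighborFinset]

theorem mem_fln {u v w : V} : w ∈ fln G u v ↔ G.Adj v w ∧ G.dist u w = G.dist u v := by
  simp [fln, Finset.mem_filter, SimpleGraph.mem_neighborFinset]

theorem mem_privs {u v y : V} :
    y ∈ privs G u v ↔ (G.Adj v y ∧ G.dist u y = G.dist u v + 1) ∧ dwn G u y = {v} := by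
  rw [privs, Finset.mem_filter, mem_upn]

end ThetaAux

namespace ThetaAux
variable {V : Type*} [Fintype V] [DecidableEq V] {G : SimpleGraph V} [DecidableRel G.Adj]

theorem sym2_left_inj {v x y : V} (hx : v ≠ x) : s(v, x) = s(v, y) → x = y := by
  intro h
  rw [Sym2.eq_iff] at h
  rcases h with ⟨-, h⟩ | ⟨h1, h2⟩
  · exact h
  · exact absurd h2.symm hx

variable {u : V} {N : ℕ}

theorem nonup_cycle {v a b : V} (hv : G.Reachable u v) (hvN : G.dist u v ≤ N)
    (hva : G.Adj v a) (hvb : G.Adj v b) (hab : a ≠ b)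
    (hda : G.dist u a ≤ G.dist u v) (hdb : G.dist u b ≤ G.dist u v) :
    ∃ K : G.Walk v v, K.IsCycle ∧ s(v, a) ∈ K.edges ∧ s(v, b) ∈ K.edges ∧
      (∀ x ∈ K.support, Ball G u N x) ∧
      (∀ x ∈ K.support, x = v ∨ G.dist u x ≤ max (G.dist u a) (G.dist u b)) ∧
      (∀ e ∈ K.edges, v ∈ e → e = s(v, a) ∨ e = s(v, b)) ∧
      (G.dist u b ≤ G.dist u a → 1 ≤ G.dist u a →
        ∃ c : V, G.Adj a c ∧ G.dist u c + 1 = G.dist u a ∧ s(a, c) ∈ K.edges) := by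
  obtain ⟨K, hK, hea, heb, hsup, hedge, hlast⟩ :=
    build_cycle hva hvb hab (reachable_adj hv hva) (reachable_adj hv hvb) hda hdb
  refine ⟨K, hK, hea, heb, ?_, ?_, hedge, hlast⟩
  · intro x hx
    rcases hsup x hx with rfl | ⟨hr, hle⟩
    · exact ⟨hv, hvN⟩
    · exact ⟨hr, le_trans hle (le_trans (max_le hda hdb) hvN)⟩
  · intro x hx
    rcases hsup x hx with rfl | ⟨-, hle⟩
    · exact Or.inl rfl
    · exact Or.inr hle

theorem up_cycle {v y : V} (hv : G.Reachable u v) (h2 : G.dist u v + 1 ≤ N)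
    (hy : y ∈ upn G u v) (hnp : dwn G u y ≠ {v}) :
    ∃ K : G.Walk y y, K.IsCycle ∧ s(y, v) ∈ K.edges ∧ v ∈ K.support ∧
      (∀ x ∈ K.support, Ball G u N x) ∧
      (∀ x ∈ K.support, x = y ∨ G.dist u x ≤ G.dist u v) ∧
      (∀ e ∈ K.edges, y ∈ e → e = s(y, v) ∨ ∃ w, w ≠ v ∧ e = s(y, w)) := by
  obtain ⟨hadj, hdy⟩ := mem_upn.mp hy
  have hry : G.Reachable u y := reachable_adj hv hadj
  have hvdwn : v ∈ dwn G u y := mem_dwn.mpr ⟨hadj.symm, by omega⟩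
  obtain ⟨w, hw, hwv⟩ : ∃ w ∈ dwn G u y, w ≠ v := by
    by_contra hcon
    push_neg at hcon
    exact hnp (Finset.eq_singleton_iff_unique_mem.mpr ⟨hvdwn, hcon⟩)
  obtain ⟨hwadj, hwd⟩ := mem_dwn.mp hw
  obtain ⟨K, hK, hea, heb, hsup, hedge, -⟩ :=
    build_cycle hadj.symm hwadj (fun h => hwv h.symm) hv (reachable_adj hry hwadj)
      (by omega) (by omega)
  refine ⟨K, hK, hea, Walk.snd_mem_support_of_mem_edges K hea, ?_, ?_, ?_⟩
  · intro x hx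
    rcases hsup x hx with rfl | ⟨hr, hle⟩
    · exact ⟨hry, by omega⟩
    · refine ⟨hr, ?_⟩
      have : max (G.dist u v) (G.dist u w) ≤ G.dist u v := by omega
      omega
  · intro x hx
    rcases hsup x hx with rfl | ⟨-, hle⟩
    · exact Or.inl rfl
    · right
      have : max (G.dist u v) (G.dist u w) ≤ G.dist u v := by omega
      omega
  · intro e he hye
    rcases hedge e he hye with rfl | rfl
    · exact Or.inl rfl
    · exact Or.inr ⟨w, hwv, rfl⟩

theorem M1 (HT : NoTheta G (Ball G u N)) (hdeg : ∀ v : V, G.degree v ≤ 3)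
    (hdeg3 : ∀ v : V, Ball G u N v → G.degree v = 3)
    {v : V} (hv : G.Reachable u v) (h1 : 1 ≤ G.dist u v) (h2 : G.dist u v + 1 ≤ N) :
    (privs G u v).Nonempty := by
  by_contra hne
  rw [Finset.not_nonempty_iff_eq_empty] at hne
  have hnp : ∀ y ∈ upn G u v, dwn G u y ≠ {v} := by
    intro y hy hcon
    have : y ∈ privs G u v := by
      rw [privs, Finset.mem_filter]; exact ⟨hy, hcon⟩
    rw [hne] at this
    simp at this
  have hvN : G.dist u v ≤ N := by omega
  have hdc := neighbor_card_split (G := G) (u := u) hv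
  rw [hdeg3 v ⟨hv, by omega⟩] at hdc
  have hd1 : 1 ≤ (dwn G u v).card := Finset.card_pos.mpr (dwn_nonempty hv h1)
  -- the set of non-up neighbours
  set T : Finset V := dwn G u v ∪ fln G u v with hTdef
  have hTprop : ∀ x ∈ T, G.Adj v x ∧ G.dist u x ≤ G.dist u v := by
    intro x hx
    rw [hTdef, Finset.mem_union] at hx
    rcases hx with hx | hx
    · obtain ⟨ha, hd⟩ := mem_dwn.mp hx; exact ⟨ha, by omega⟩
    · obtain ⟨ha, hd⟩ := mem_fln.mp hx; exact ⟨ha, by omega⟩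
  have hTcard : T.card + (upn G u v).card = 3 := by
    rw [hTdef, Finset.card_union_of_disjoint]
    · omega
    · rw [Finset.disjoint_left]
      intro w hw1 hw2
      rw [mem_dwn] at hw1; rw [mem_fln] at hw2
      omega
  rcases Nat.lt_or_ge (upn G u v).card 1 with hu0 | hu1
  · -- no ups : three non-up neighbours, two cycles through v
    have hT3 : T.card = 3 := by omega
    obtain ⟨a', b', c'', hab, hac, hbc, hTeq⟩ := Finset.card_eq_three.mp hT3
    have ha' := hTprop a' (by rw [hTeq]; simp)
    have hb' := hTprop b' (by rw [hTeq]; simp)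
    have hc'' := hTprop c'' (by rw [hTeq]; simp)
    obtain ⟨K, hK, -, -, hKB, -, hKedge, -⟩ :=
      nonup_cycle hv hvN ha'.1 hb'.1 hab ha'.2 hb'.2
    obtain ⟨K', hK', -, heK'c, hK'B, -, -, -⟩ :=
      nonup_cycle hv hvN ha'.1 hc''.1 hac ha'.2 hc''.2
    refine cycles_meet HT hdeg hK' hK (fun x hx => hK'B x hx) (fun x hx => hKB x hx)
      K'.start_mem_support K.start_mem_support heK'c ?_
    intro hmem
    rcases hKedge _ hmem (Sym2.mem_mk_left v c'') with h | h
    · exact hac (sym2_left_inj ha'.1.ne h.symm)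
    · exact hbc (sym2_left_inj hb'.1.ne h.symm)
  · rcases Nat.lt_or_ge (upn G u v).card 2 with hu1' | hu2
    · -- exactly one up; two non-ups
      have hT2 : 2 ≤ T.card := by omega
      obtain ⟨a', ha'm, b', hb'm, hab⟩ := Finset.one_lt_card.mp (by omega : 1 < T.card)
      have ha' := hTprop a' ha'm
      have hb' := hTprop b' hb'm
      obtain ⟨y, hy⟩ := Finset.card_pos.mp (by omega : 0 < (upn G u v).card)
      have hyd := (mem_upn.mp hy).2
      obtain ⟨Ky, hKy, heyv, hvKy, hKyB, -, -⟩ := up_cycle hv h2 hy (hnp y hy)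
      obtain ⟨K, hK, -, -, hKB, -, hKedge, -⟩ :=
        nonup_cycle hv hvN ha'.1 hb'.1 hab ha'.2 hb'.2
      refine cycles_meet HT hdeg hKy hK (fun x hx => hKyB x hx) (fun x hx => hKB x hx)
        hvKy K.start_mem_support heyv ?_
      intro hmem
      have hyv : s(y, v) = s(v, y) := Sym2.eq_swap
      rw [hyv] at hmem
      rcases hKedge _ hmem (Sym2.mem_mk_left v y) with h | h
      · have heq := sym2_left_inj ha'.1.ne h.symm
        have hda' := ha'.2
        rw [heq] at hda'
        omega
      · have heq := sym2_left_inj hb'.1.ne h.symm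
        have hdb' := hb'.2
        rw [heq] at hdb'
        omega
    · -- two ups
      obtain ⟨y₁, hy₁m, y₂, hy₂m, hyy⟩ :=
        Finset.one_lt_card.mp (by omega : 1 < (upn G u v).card)
      obtain ⟨K₁, hK₁, hey₁, hvK₁, hK₁B, hK₁sup, -⟩ := up_cycle hv h2 hy₁m (hnp y₁ hy₁m)
      obtain ⟨K₂, hK₂, hey₂, hvK₂, hK₂B, -, -⟩ := up_cycle hv h2 hy₂m (hnp y₂ hy₂m)
      refine cycles_meet HT hdeg hK₂ hK₁ (fun x hx => hK₂B x hx) (fun x hx => hK₁B x hx)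
        hvK₂ hvK₁ hey₂ ?_
      intro hmem
      have : y₂ ∈ K₁.support := Walk.fst_mem_support_of_mem_edges K₁ hmem
      rcases hK₁sup y₂ this with rfl | hle
      · exact hyy rfl
      · have := (mem_upn.mp hy₂m).2
        omega

end ThetaAux

namespace ThetaAux
variable {V : Type*} [Fintype V] [DecidableEq V] {G : SimpleGraph V} [DecidableRel G.Adj]
variable {u : V} {N : ℕ}

set_option maxHeartbeats 1000000 in
theorem M2 (HT : NoTheta G (Ball G u N)) (hdeg : ∀ v : V, G.degree v ≤ 3)
    (hdeg3 : ∀ v : V, Ball G u N v → G.degree v = 3)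
    {v z : V} (hv : G.Reachable u v) (h1 : 1 ≤ G.dist u v)
    (h2 : G.dist u v + 2 ≤ N) (hz : privs G u v = {z}) : 2 ≤ (privs G u z).card := by
  have hzmem : z ∈ privs G u v := by rw [hz]; simp
  obtain ⟨⟨hvza, hdz⟩, hdwnz⟩ := mem_privs.mp hzmem
  have hrz : G.Reachable u z := reachable_adj hv hvza
  have huniq : ∀ y ∈ upn G u v, y ≠ z → dwn G u y ≠ {v} := by
    intro y hy hyz hcon
    have : y ∈ privs G u v := by rw [privs, Finset.mem_filter]; exact ⟨hy, hcon⟩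
    rw [hz, Finset.mem_singleton] at this
    exact hyz this
  -- build the second cycle K⋆ through v avoiding z
  obtain ⟨w₀, K', hK', hvK', hzK', hK'B⟩ :
      ∃ (w₀ : V) (K : G.Walk w₀ w₀), K.IsCycle ∧ v ∈ K.support ∧ z ∉ K.support ∧
        ∀ x ∈ K.support, Ball G u N x := by
    have hzup : z ∈ upn G u v := mem_upn.mpr ⟨hvza, hdz⟩
    have hdc := neighbor_card_split (G := G) (u := u) hv
    rw [hdeg3 v ⟨hv, by omega⟩] at hdc
    have hd1 : 1 ≤ (dwn G u v).card := Finset.card_pos.mpr (dwn_nonempty hv h1)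
    rcases Nat.lt_or_ge (upn G u v).card 2 with hu1 | hu2
    · -- upn v = {z} ; two non-up neighbours
      set T : Finset V := dwn G u v ∪ fln G u v with hTdef
      have hTprop : ∀ x ∈ T, G.Adj v x ∧ G.dist u x ≤ G.dist u v := by
        intro x hx
        rw [hTdef, Finset.mem_union] at hx
        rcases hx with hx | hx
        · obtain ⟨ha, hd⟩ := mem_dwn.mp hx; exact ⟨ha, by omega⟩
        · obtain ⟨ha, hd⟩ := mem_fln.mp hx; exact ⟨ha, by omega⟩
      have hTcard : T.card + (upn G u v).card = 3 := by
        rw [hTdef, Finset.card_union_of_disjoint]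
        · omega
        · rw [Finset.disjoint_left]
          intro w hw1 hw2
          rw [mem_dwn] at hw1; rw [mem_fln] at hw2
          omega
      have huz1 : 1 ≤ (upn G u v).card := Finset.card_pos.mpr ⟨z, hzup⟩
      obtain ⟨a', ha'm, b', hb'm, hab⟩ := Finset.one_lt_card.mp (by omega : 1 < T.card)
      have ha' := hTprop a' ha'm
      have hb' := hTprop b' hb'm
      obtain ⟨K, hK, -, -, hKB, hKsup, -, -⟩ :=
        nonup_cycle hv (show G.dist u v ≤ N by omega) ha'.1 hb'.1 hab ha'.2 hb'.2
      refine ⟨v, K, hK, K.start_mem_support, ?_, hKB⟩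
      intro hmem
      rcases hKsup z hmem with rfl | hle
      · exact hvza.ne rfl
      · have : max (G.dist u a') (G.dist u b') ≤ G.dist u v := by omega
        omega
    · -- another up neighbour y' ≠ z
      obtain ⟨y', hy'm, hy'z⟩ : ∃ y' ∈ upn G u v, y' ≠ z := by
        by_contra hcon
        push_neg at hcon
        have : upn G u v ⊆ {z} := fun y hy => Finset.mem_singleton.mpr (hcon y hy)
        have := Finset.card_le_card this
        simp at this
        omega
      obtain ⟨Ky, hKy, -, hvKy, hKyB, hKysup, -⟩ :=
        up_cycle hv (show G.dist u v + 1 ≤ N by omega) hy'm (huniq y' hy'm hy'z)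
      refine ⟨y', Ky, hKy, hvKy, ?_, hKyB⟩
      intro hmem
      rcases hKysup z hmem with rfl | hle
      · exact hy'z rfl
      · omega
  -- now analyse z
  have hzB : Ball G u N z := ⟨hrz, by omega⟩
  have hdcz := neighbor_card_split (G := G) (u := u) hrz
  rw [hdeg3 z hzB] at hdcz
  have hdz1 : (dwn G u z).card = 1 := by rw [hdwnz]; simp
  rcases Nat.lt_or_ge (fln G u z).card 1 with hf0 | hf1
  · -- no flats at z : two up-neighbours
    by_contra hlt
    push_neg at hlt
    have hupz2 : (upn G u z).card = 2 := by omega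
    obtain ⟨y₁, hy₁up, hy₁np⟩ : ∃ y₁ ∈ upn G u z, dwn G u y₁ ≠ {z} := by
      by_contra hcon
      push_neg at hcon
      have hsub : upn G u z ⊆ privs G u z := by
        intro y hy
        rw [privs, Finset.mem_filter]
        exact ⟨hy, hcon y hy⟩
      have := Finset.card_le_card hsub
      omega
    obtain ⟨hzy₁, hdy₁⟩ := mem_upn.mp hy₁up
    have hry₁ : G.Reachable u y₁ := reachable_adj hrz hzy₁
    have hzdwn : z ∈ dwn G u y₁ := mem_dwn.mpr ⟨hzy₁.symm, by omega⟩
    obtain ⟨w₁, hw₁, hw₁z⟩ : ∃ w₁ ∈ dwn G u y₁, w₁ ≠ z := by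
      by_contra hcon
      push_neg at hcon
      exact hy₁np (Finset.eq_singleton_iff_unique_mem.mpr ⟨hzdwn, hcon⟩)
    obtain ⟨hw₁adj, hw₁d⟩ := mem_dwn.mp hw₁
    obtain ⟨KC, hKC, -, -, hKCsup, -, hKClast⟩ :=
      build_cycle hzy₁.symm hw₁adj (fun h => hw₁z h.symm) hrz (reachable_adj hry₁ hw₁adj)
        (by omega) (by omega)
    obtain ⟨c, hc, hcd, hce⟩ := hKClast (by omega) (by omega)
    have hcv : c = v := by
      have : c ∈ dwn G u z := mem_dwn.mpr ⟨hc, by omega⟩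
      rw [hdwnz, Finset.mem_singleton] at this
      exact this
    rw [hcv] at hce
    have hvKC : v ∈ KC.support := Walk.snd_mem_support_of_mem_edges KC hce
    refine absurd (cycles_meet HT hdeg hKC hK' ?_ hK'B hvKC hvK' hce ?_) (fun h => h)
    · intro x hx
      rcases hKCsup x hx with rfl | ⟨hr, hle⟩
      · exact ⟨hry₁, by omega⟩
      · refine ⟨hr, ?_⟩
        have : max (G.dist u z) (G.dist u w₁) ≤ G.dist u z := by omega
        omega
    · intro hmem
      exact hzK' (Walk.fst_mem_support_of_mem_edges K' hmem)
  · -- a flat neighbour at z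
    obtain ⟨xt, hxt⟩ := Finset.card_pos.mp (by omega : 0 < (fln G u z).card)
    obtain ⟨hxta, hxtd⟩ := mem_fln.mp hxt
    have hvxt : v ≠ xt := by
      intro h
      rw [← h] at hxtd
      omega
    obtain ⟨KA, hKA, heA, -, hKAB, -, -, -⟩ :=
      nonup_cycle (v := z) hrz (show G.dist u z ≤ N by omega) hvza.symm hxta hvxt
        (show G.dist u v ≤ G.dist u z by omega) (show G.dist u xt ≤ G.dist u z by omega)
    have hvKA : v ∈ KA.support := Walk.snd_mem_support_of_mem_edges KA heA
    refine absurd (cycles_meet HT hdeg hKA hK' hKAB hK'B hvKA hvK' heA ?_) (fun h => h)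
    intro hmem
    exact hzK' (Walk.fst_mem_support_of_mem_edges K' hmem)

end ThetaAux

namespace ThetaAux
variable {V : Type*} [Fintype V] [DecidableEq V] {G : SimpleGraph V} [DecidableRel G.Adj]
variable {u : V} {N : ℕ}

open Classical in
/-- the sphere of radius `j` about `u` -/
noncomputable def lay (G : SimpleGraph V) (u : V) (j : ℕ) : Finset V :=
  Finset.univ.filter (fun v => G.Reachable u v ∧ G.dist u v = j)

theorem mem_lay {j : ℕ} {v : V} : v ∈ lay G u j ↔ G.Reachable u v ∧ G.dist u v = j := by
  simp [lay]

theorem privs_subset_lay {j : ℕ} {x : V} (hx : x ∈ lay G u j) :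
    privs G u x ⊆ lay G u (j + 1) := by
  intro y hy
  obtain ⟨hrx, hdx⟩ := mem_lay.mp hx
  obtain ⟨⟨hadj, hd⟩, -⟩ := mem_privs.mp hy
  exact mem_lay.mpr ⟨reachable_adj hrx hadj, by omega⟩

theorem privs_pairwise_disjoint {x₁ x₂ : V} (h : x₁ ≠ x₂) :
    Disjoint (privs G u x₁) (privs G u x₂) := by
  rw [Finset.disjoint_left]
  intro y hy₁ hy₂
  obtain ⟨-, hd₁⟩ := mem_privs.mp hy₁
  obtain ⟨-, hd₂⟩ := mem_privs.mp hy₂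
  rw [hd₁] at hd₂
  exact h (Finset.singleton_injective hd₂)

theorem sum_privs_le (j : ℕ) :
    ∑ x ∈ lay G u j, (privs G u x).card ≤ (lay G u (j + 1)).card := by
  rw [← Finset.card_biUnion (fun x _ y _ hxy => privs_pairwise_disjoint hxy)]
  apply Finset.card_le_card
  intro y hy
  rw [Finset.mem_biUnion] at hy
  obtain ⟨x, hx, hyx⟩ := hy
  exact privs_subset_lay hx hyx

theorem core_two (HT : NoTheta G (Ball G u N)) (hdeg : ∀ v : V, G.degree v ≤ 3)
    (hdeg3 : ∀ v : V, Ball G u N v → G.degree v = 3)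
    {j : ℕ} {x : V} (hx : x ∈ lay G u j) (h1 : 1 ≤ j) (h2 : j + 2 ≤ N) :
    2 ≤ ∑ y ∈ privs G u x, (privs G u y).card := by
  obtain ⟨hrx, hdx⟩ := mem_lay.mp hx
  have hM1 : (privs G u x).Nonempty := M1 HT hdeg hdeg3 hrx (by omega) (by omega)
  rcases Nat.lt_or_ge (privs G u x).card 2 with hlt | hge
  · have hcard1 : (privs G u x).card = 1 := by
      have := Finset.card_pos.mpr hM1
      omega
    obtain ⟨z, hzeq⟩ := Finset.card_eq_one.mp hcard1
    have := M2 HT hdeg hdeg3 hrx (by omega) (by omega) hzeq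
    rw [hzeq, Finset.sum_singleton]
    exact this
  · obtain ⟨y₁, hy₁, y₂, hy₂, hyy⟩ := Finset.one_lt_card.mp hge
    have hp₁ : 1 ≤ (privs G u y₁).card := by
      obtain ⟨⟨hadj, hd⟩, -⟩ := mem_privs.mp hy₁
      refine Finset.card_pos.mpr (M1 HT hdeg hdeg3 (reachable_adj hrx hadj) ?_ ?_) <;> omega
    have hp₂ : 1 ≤ (privs G u y₂).card := by
      obtain ⟨⟨hadj, hd⟩, -⟩ := mem_privs.mp hy₂
      refine Finset.card_pos.mpr (M1 HT hdeg hdeg3 (reachable_adj hrx hadj) ?_ ?_) <;> omega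
    have hsub : ({y₁, y₂} : Finset V) ⊆ privs G u x := by
      intro y hy
      simp only [Finset.mem_insert, Finset.mem_singleton] at hy
      rcases hy with rfl | rfl <;> assumption
    have hsum : (privs G u y₁).card + (privs G u y₂).card
        ≤ ∑ y ∈ privs G u x, (privs G u y).card := by
      have := Finset.sum_le_sum_of_subset (f := fun y => (privs G u y).card) hsub
      rwa [Finset.sum_pair hyy] at this
    omega

theorem layer_step (HT : NoTheta G (Ball G u N)) (hdeg : ∀ v : V, G.degree v ≤ 3)
    (hdeg3 : ∀ v : V, Ball G u N v → G.degree v = 3)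
    {j : ℕ} (h1 : 1 ≤ j) (h2 : j + 2 ≤ N) :
    2 * (lay G u j).card ≤ (lay G u (j + 2)).card := by
  have hdisj : Set.PairwiseDisjoint ↑(lay G u j) (privs G u) :=
    fun x _ y _ hxy => privs_pairwise_disjoint hxy
  calc 2 * (lay G u j).card
      = ∑ _x ∈ lay G u j, 2 := by rw [Finset.sum_const, smul_eq_mul, mul_comm]
    _ ≤ ∑ x ∈ lay G u j, ∑ y ∈ privs G u x, (privs G u y).card :=
        Finset.sum_le_sum (fun x hx => core_two HT hdeg hdeg3 hx h1 h2)
    _ = ∑ y ∈ (lay G u j).biUnion (privs G u), (privs G u y).card :=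
        (Finset.sum_biUnion hdisj).symm
    _ ≤ ∑ y ∈ lay G u (j + 1), (privs G u y).card := by
        apply Finset.sum_le_sum_of_subset
        intro y hy
        rw [Finset.mem_biUnion] at hy
        obtain ⟨x, hx, hyx⟩ := hy
        exact privs_subset_lay hx hyx
    _ ≤ (lay G u (j + 2)).card := sum_privs_le (j + 1)

theorem chain (HT : NoTheta G (Ball G u N)) (hdeg : ∀ v : V, G.degree v ≤ 3)
    (hdeg3 : ∀ v : V, Ball G u N v → G.degree v = 3) (hu3 : (lay G u 1).card = 3) :
    ∀ t : ℕ, 2 * t + 1 ≤ N → 3 * 2 ^ t ≤ (lay G u (2 * t + 1)).card := by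
  intro t
  induction t with
  | zero => intro h; simpa using hu3.ge
  | succ t ih =>
    intro h
    have hstep := layer_step HT hdeg hdeg3 (j := 2 * t + 1) (by omega) (by omega)
    have := ih (by omega)
    have harith : 2 * t + 1 + 2 = 2 * (t + 1) + 1 := by omega
    rw [harith] at hstep
    have : 3 * 2 ^ (t + 1) = 2 * (3 * 2 ^ t) := by ring
    omega

end ThetaAux

namespace ThetaAux
variable {V : Type*} [Fintype V] [DecidableEq V] {G : SimpleGraph V} [DecidableRel G.Adj]

theorem lay_one (u : V) : (lay G u 1).card = G.degree u := by
  rw [← SimpleGraph.card_neighborFinset_eq_degree]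
  congr 1
  ext v
  rw [mem_lay, SimpleGraph.mem_neighborFinset]
  constructor
  · rintro ⟨-, hd⟩
    exact SimpleGraph.dist_eq_one_iff_adj.mp hd
  · intro h
    exact ⟨h.reachable, SimpleGraph.dist_eq_one_iff_adj.mpr h⟩

end ThetaAux


open ThetaAux

/-- In a subcubic graph on `n ≥ 2` vertices, the ball of radius `2⌈log₂ n⌉` around any vertex
`u` contains a vertex of degree at most 2 or all vertices of a theta. -/
theorem stmt_15 {V : Type*} [Fintype V] (G : SimpleGraph V) [DecidableRel G.Adj]
    (hn : 2 ≤ Fintype.card V) (hdeg : ∀ v : V, G.degree v ≤ 3) (u : V) :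
    (∃ v : V, G.Reachable u v ∧ G.dist u v ≤ 2 * Nat.clog 2 (Fintype.card V) ∧
      G.degree v ≤ 2) ∨
    (∃ (a b : V) (p₁ p₂ p₃ : G.Walk a b), IsTheta G a b p₁ p₂ p₃ ∧
      ∀ x : V, (x ∈ p₁.support ∨ x ∈ p₂.support ∨ x ∈ p₃.support) →
        G.Reachable u x ∧ G.dist u x ≤ 2 * Nat.clog 2 (Fintype.card V)) := by
  
  classical
  by_contra hcon
  rw [not_or] at hcon
  obtain ⟨hA, hB⟩ := hcon
  set R : ℕ := Nat.clog 2 (Fintype.card V) with hRdef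
  set N : ℕ := 2 * R with hNdef
  have hR1 : 1 ≤ R := Nat.clog_pos one_lt_two hn
  have hdeg3 : ∀ v : V, Ball G u N v → G.degree v = 3 := by
    intro v hv
    obtain ⟨hr, hd⟩ := hv
    have h3 := hdeg v
    by_contra hne
    exact hA ⟨v, hr, hd, by omega⟩
  have HT : NoTheta G (Ball G u N) := by
    intro a b p₁ p₂ p₃ hTh hBall
    exact hB ⟨a, b, p₁, p₂, p₃, hTh, fun x hx => hBall x hx⟩
  have hu3 : (lay G u 1).card = 3 := by
    rw [lay_one]
    exact hdeg3 u ⟨Reachable.refl u, by rw [SimpleGraph.dist_self]; exact Nat.zero_le N⟩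
  have hchain := chain HT hdeg hdeg3 hu3 (R - 1) (by omega)
  have hunot : u ∉ lay G u (2 * (R - 1) + 1) := by
    rw [mem_lay]
    rintro ⟨-, hd⟩
    rw [SimpleGraph.dist_self] at hd
    omega
  have hcardle : (lay G u (2 * (R - 1) + 1)).card + 1 ≤ Fintype.card V := by
    have h1 : (insert u (lay G u (2 * (R - 1) + 1))).card
        = (lay G u (2 * (R - 1) + 1)).card + 1 := Finset.card_insert_of_notMem hunot
    have h2 := Finset.card_le_univ (insert u (lay G u (2 * (R - 1) + 1)))
    rw [h1] at h2
    simpa using h2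
  have hpow : Fintype.card V ≤ 2 ^ R := Nat.le_pow_clog one_lt_two _
  have hRe : R = (R - 1) + 1 := by omega
  have hpows : 2 ^ R = 2 ^ (R - 1) * 2 := by
    calc 2 ^ R = 2 ^ ((R - 1) + 1) := by rw [← hRe]
      _ = 2 ^ (R - 1) * 2 := pow_succ 2 (R - 1)
  have h1le : 1 ≤ 2 ^ (R - 1) := Nat.one_le_two_pow
  omega
end

section
/- There is an absolute constant C such that for every w ≥ 3 and any two proper 3-colorings s and t of the 4×w toroidal grid, there exists a recoloring schedule from s to t of length at most C using colors {1,2,3,4}. -/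
open SimpleGraph

/-- A proper `m`-coloring: colors in `{1,…,m}`, adjacent vertices get distinct colors. -/
def IsProperColoring {V : Type*} (G : SimpleGraph V) (m : ℕ) (x : V → ℕ) : Prop :=
  (∀ v, x v ∈ Finset.Icc 1 m) ∧ ∀ ⦃u v : V⦄, G.Adj u v → x u ≠ x v

/-- A recoloring schedule from `s` to `t` of length `ℓ` using colors `{1,…,m}`:
a sequence of proper `m`-colorings `X 0 = s, …, X ℓ = t` such that at each step the set of
vertices that change color is an independent set. -/
def IsRecolorSchedule {V : Type*} (G : SimpleGraph V) (m : ℕ) (s t : V → ℕ)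
    (ℓ : ℕ) (X : ℕ → V → ℕ) : Prop :=
  X 0 = s ∧ X ℓ = t ∧ (∀ i ≤ ℓ, IsProperColoring G m (X i)) ∧
  ∀ i, 1 ≤ i → i ≤ ℓ → ∀ ⦃u v : V⦄, G.Adj u v → X (i - 1) u = X i u ∨ X (i - 1) v = X i v

/-- The `h × w` toroidal grid: vertices `(a, b) ∈ (ℤ/hℤ) × (ℤ/wℤ)`, with `(a, b)` adjacent to
`(c, d)` iff either `a = c` and `b - d ≡ ±1 (mod w)`, or `b = d` and `a - c ≡ ±1 (mod h)`. -/
def torGrid (h w : ℕ) : SimpleGraph (ZMod h × ZMod w) where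
  Adj x y := x ≠ y ∧
    ((x.1 = y.1 ∧ (x.2 - y.2 = 1 ∨ y.2 - x.2 = 1)) ∨
     (x.2 = y.2 ∧ (x.1 - y.1 = 1 ∨ y.1 - x.1 = 1)))
  symm := by
    constructor
    rintro x y ⟨hne, (⟨h1, h2⟩ | ⟨h1, h2⟩)⟩
    · exact ⟨hne.symm, Or.inl ⟨h1.symm, h2.symm⟩⟩
    · exact ⟨hne.symm, Or.inr ⟨h1.symm, h2.symm⟩⟩
  loopless := by
    constructor
    rintro x ⟨hne, -⟩
    exact hne rfl

/-! ### generic helpers -/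

def pick2 (a b : ℕ) : ℕ := if a ≠ 1 ∧ b ≠ 1 then 1 else if a ≠ 2 ∧ b ≠ 2 then 2 else 3

lemma pick2_spec (a b : ℕ) : pick2 a b ≠ a ∧ pick2 a b ≠ b ∧ 1 ≤ pick2 a b ∧ pick2 a b ≤ 3 := by
  unfold pick2; split_ifs with h1 h2 <;> omega

lemma adj_dest' {w : ℕ} {u v : ZMod 4 × ZMod w} (h : (torGrid 4 w).Adj u v) :
    (u.1 = v.1 ∧ (u.2 = v.2 + 1 ∨ v.2 = u.2 + 1)) ∨
    (u.2 = v.2 ∧ (u.1 = v.1 + 1 ∨ v.1 = u.1 + 1)) := by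
  obtain ⟨-, (⟨h1, h2 | h2⟩ | ⟨h1, h2 | h2⟩)⟩ := h
  · exact Or.inl ⟨h1, Or.inl (by rw [sub_eq_iff_eq_add] at h2; rw [h2, add_comm])⟩
  · exact Or.inl ⟨h1, Or.inr (by rw [sub_eq_iff_eq_add] at h2; rw [h2, add_comm])⟩
  · exact Or.inr ⟨h1, Or.inl (by rw [sub_eq_iff_eq_add] at h2; rw [h2, add_comm])⟩
  · exact Or.inr ⟨h1, Or.inr (by rw [sub_eq_iff_eq_add] at h2; rw [h2, add_comm])⟩

def succN (q k : ℕ) : ℕ := if k + 1 = q then 0 else k + 1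

section W
variable {w : ℕ}

lemma val_succ_w (hw : 3 ≤ w) (b : ZMod w) : (b + 1).val = succN w b.val := by
  haveI : NeZero w := ⟨by omega⟩
  haveI : Fact (1 < w) := ⟨by omega⟩
  rw [ZMod.val_add, ZMod.val_one]
  have hb := ZMod.val_lt b
  unfold succN
  split_ifs with h
  · rw [h, Nat.mod_self]
  · exact Nat.mod_eq_of_lt (by omega)

lemma val_succ_4 (a : ZMod 4) : (a + 1).val = succN 4 a.val := by
  revert a; decide

lemma adj_val (hw : 3 ≤ w) {u v : ZMod 4 × ZMod w} (h : (torGrid 4 w).Adj u v) :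
    (u.1 = v.1 ∧ (u.2.val = succN w v.2.val ∨ v.2.val = succN w u.2.val)) ∨
    (u.2.val = v.2.val ∧ (u.1.val = succN 4 v.1.val ∨ v.1.val = succN 4 u.1.val)) := by
  rcases adj_dest' h with ⟨h1, h2 | h2⟩ | ⟨h1, h2 | h2⟩
  · exact Or.inl ⟨h1, Or.inl (by rw [h2, val_succ_w hw])⟩
  · exact Or.inl ⟨h1, Or.inr (by rw [h2, val_succ_w hw])⟩
  · exact Or.inr ⟨by rw [h1], Or.inl (by rw [h2, val_succ_4])⟩
  · exact Or.inr ⟨by rw [h1], Or.inr (by rw [h2, val_succ_4])⟩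

lemma eq_cast_of_val (hw : 3 ≤ w) {b : ZMod w} {k : ℕ} (h : b.val = k % w) :
    b = ((k : ℕ) : ZMod w) := by
  haveI : NeZero w := ⟨by omega⟩
  apply ZMod.val_injective
  rw [h, ZMod.val_natCast]

lemma z4_val : ∀ a : ZMod 4, (a.val = 0 → a = 0) ∧ (a.val = 1 → a = 1) ∧ (a.val = 2 → a = 2) ∧ (a.val = 3 → a = 3) := by
  decide

lemma row_ne_succ : ∀ a : ZMod 4, a ≠ a + 1 := by decide

lemma col_ne_succ (hw : 3 ≤ w) : ∀ b : ZMod w, b ≠ b + 1 := by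
  haveI : NeZero w := ⟨by omega⟩
  intro b h
  have h2 := val_succ_w hw b
  rw [← h] at h2
  have hb := ZMod.val_lt b
  unfold succN at h2
  split_ifs at h2 <;> omega

lemma adj_h (hw : 3 ≤ w) (a : ZMod 4) (b : ZMod w) : (torGrid 4 w).Adj (a, b) (a, b + 1) := by
  refine ⟨?_, Or.inl ⟨rfl, Or.inr (by simp)⟩⟩
  simp only [ne_eq, Prod.mk.injEq, not_and]
  exact fun _ => col_ne_succ hw b

lemma adj_v (a : ZMod 4) (b : ZMod w) : (torGrid 4 w).Adj (a, b) (a + 1, b) := by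
  refine ⟨?_, Or.inr ⟨rfl, Or.inr (by simp)⟩⟩
  simp only [ne_eq, Prod.mk.injEq, not_and]
  intro h; exact absurd h (row_ne_succ a)

lemma proper_of {m : ℕ} {x : ZMod 4 × ZMod w → ℕ}
    (hm : ∀ v, x v ∈ Finset.Icc 1 m)
    (hh : ∀ (a : ZMod 4) (b : ZMod w), x (a, b) ≠ x (a, b + 1))
    (hv : ∀ (a : ZMod 4) (b : ZMod w), x (a, b) ≠ x (a + 1, b)) :
    IsProperColoring (torGrid 4 w) m x := by
  refine ⟨hm, ?_⟩
  rintro ⟨a, b⟩ ⟨c, d⟩ h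
  rcases adj_dest' h with ⟨h1, h2 | h2⟩ | ⟨h1, h2 | h2⟩
  · dsimp at h1 h2; subst h1 h2; exact (hh a d).symm
  · dsimp at h1 h2; subst h1 h2; exact hh a b
  · dsimp at h1 h2; subst h1 h2; exact (hv c b).symm
  · dsimp at h1 h2; subst h1 h2; exact hv a b

lemma step_of {x y : ZMod 4 × ZMod w → ℕ} (S : ZMod 4 × ZMod w → Prop)
    (hdiff : ∀ v, x v ≠ y v → S v)
    (hind : ∀ u v, (torGrid 4 w).Adj u v → S u → S v → False) :
    ∀ ⦃u v : ZMod 4 × ZMod w⦄, (torGrid 4 w).Adj u v → x u = y u ∨ x v = y v := by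
  intro u v h
  by_contra hc
  push_neg at hc
  exact hind u v h (hdiff u hc.1) (hdiff v hc.2)

end W


/-- the band coloring, nat level -/
def bandN (w sv g0 g1 g2 g3 e1 e3 f0 f2 m n : ℕ) : ℕ :=
  if n = 2 then (if m = 0 then g0 else if m = 1 then g1 else if m = 2 then g2 else g3)
  else if m % 2 = 1 then
    (if n = 3 then (if m = 1 then e1 else e3)
     else if n = 1 then 4
     else if n = 4 then 4
     else if n = 0 then (if w = 3 then (if m = 1 then e1 else e3) else sv)
     else sv)
  else
    (if n = 1 then (if m = 0 then f0 else f2)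
     else if n = 0 then 4
     else if n = 3 then 4
     else sv)

variable {w sv sv' g0 g1 g2 g3 e1 e3 f0 f2 m n : ℕ}

lemma bandN_0 : bandN w sv g0 g1 g2 g3 e1 e3 f0 f2 m 0
    = if m % 2 = 1 then (if w = 3 then (if m = 1 then e1 else e3) else sv) else 4 := by
  unfold bandN; split_ifs <;> first | exact ‹False›.elim | rfl | omega

lemma bandN_1 : bandN w sv g0 g1 g2 g3 e1 e3 f0 f2 m 1
    = if m % 2 = 1 then 4 else (if m = 0 then f0 else f2) := by
  unfold bandN; split_ifs <;> first | exact ‹False›.elim | rfl | omega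

lemma bandN_2 : bandN w sv g0 g1 g2 g3 e1 e3 f0 f2 m 2
    = (if m = 0 then g0 else if m = 1 then g1 else if m = 2 then g2 else g3) := by
  unfold bandN; split_ifs <;> first | exact ‹False›.elim | rfl | omega

lemma bandN_3 : bandN w sv g0 g1 g2 g3 e1 e3 f0 f2 m 3
    = if m % 2 = 1 then (if m = 1 then e1 else e3) else 4 := by
  unfold bandN; split_ifs <;> first | exact ‹False›.elim | rfl | omega

lemma bandN_4 : bandN w sv g0 g1 g2 g3 e1 e3 f0 f2 m 4
    = if m % 2 = 1 then 4 else sv := by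
  unfold bandN; split_ifs <;> first | exact ‹False›.elim | rfl | omega

lemma bandN_5 (h : 5 ≤ n) : bandN w sv g0 g1 g2 g3 e1 e3 f0 f2 m n = sv := by
  unfold bandN; split_ifs <;> first | exact ‹False›.elim | rfl | omega

lemma bandN_mem
    (hs : 1 ≤ sv ∧ sv ≤ 3) (hg : (1 ≤ g0 ∧ g0 ≤ 3) ∧ (1 ≤ g1 ∧ g1 ≤ 3) ∧ (1 ≤ g2 ∧ g2 ≤ 3) ∧ (1 ≤ g3 ∧ g3 ≤ 3))
    (he : (1 ≤ e1 ∧ e1 ≤ 3) ∧ (1 ≤ e3 ∧ e3 ≤ 3)) (hf : (1 ≤ f0 ∧ f0 ≤ 3) ∧ (1 ≤ f2 ∧ f2 ≤ 3)) :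
    1 ≤ bandN w sv g0 g1 g2 g3 e1 e3 f0 f2 m n ∧ bandN w sv g0 g1 g2 g3 e1 e3 f0 f2 m n ≤ 4 := by
  unfold bandN; split_ifs <;> first | exact ‹False›.elim | omega

lemma bandN_h
    (hw : 3 ≤ w) (hodd : w % 2 = 1) (hn : n < w) (hm : m < 4)
    (hs : sv ≠ sv') (hsB : 1 ≤ sv ∧ sv ≤ 3) (hsB' : 1 ≤ sv' ∧ sv' ≤ 3)
    (hg : (1 ≤ g0 ∧ g0 ≤ 3) ∧ (1 ≤ g1 ∧ g1 ≤ 3) ∧ (1 ≤ g2 ∧ g2 ≤ 3) ∧ (1 ≤ g3 ∧ g3 ≤ 3))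
    (he : (1 ≤ e1 ∧ e1 ≤ 3) ∧ (1 ≤ e3 ∧ e3 ≤ 3)) (hf : (1 ≤ f0 ∧ f0 ≤ 3) ∧ (1 ≤ f2 ∧ f2 ≤ 3))
    (he1 : e1 ≠ g1) (he3 : e3 ≠ g3) (hf0 : f0 ≠ g0) (hf2 : f2 ≠ g2) :
    bandN w sv g0 g1 g2 g3 e1 e3 f0 f2 m n ≠ bandN w sv' g0 g1 g2 g3 e1 e3 f0 f2 m (succN w n) := by
  rcases (show n = 0 ∨ n = 1 ∨ n = 2 ∨ n = 3 ∨ n = 4 ∨ 5 ≤ n by omega) with rfl|rfl|rfl|rfl|rfl|h5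
  · rw [show succN w 0 = 1 by unfold succN; split_ifs <;> first | exact ‹False›.elim | omega, bandN_0, bandN_1]
    split_ifs <;> first | exact ‹False›.elim | omega
  · rw [show succN w 1 = 2 by unfold succN; split_ifs <;> first | exact ‹False›.elim | omega, bandN_1, bandN_2]
    split_ifs <;> first | exact ‹False›.elim | omega
  · by_cases h3 : w = 3
    · rw [show succN w 2 = 0 by unfold succN; split_ifs <;> omega, bandN_2, bandN_0]
      split_ifs <;> first | exact ‹False›.elim | omega
    · rw [show succN w 2 = 3 by unfold succN; split_ifs <;> first | exact ‹False›.elim | omega, bandN_2, bandN_3]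
      split_ifs <;> first | exact ‹False›.elim | omega
  · rw [show succN w 3 = 4 by unfold succN; split_ifs <;> first | exact ‹False›.elim | omega, bandN_3, bandN_4]
    split_ifs <;> first | exact ‹False›.elim | omega
  · by_cases h5 : w = 5
    · rw [show succN w 4 = 0 by unfold succN; split_ifs <;> omega, bandN_4, bandN_0]
      split_ifs <;> first | exact ‹False›.elim | omega
    · rw [show succN w 4 = 5 by unfold succN; split_ifs <;> first | exact ‹False›.elim | omega, bandN_4, bandN_5 (le_refl 5)]
      split_ifs <;> first | exact ‹False›.elim | omega
  · by_cases hlast : n + 1 = w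
    · rw [show succN w n = 0 by unfold succN; split_ifs <;> omega, bandN_5 h5, bandN_0]
      split_ifs <;> first | exact ‹False›.elim | omega
    · rw [show succN w n = n + 1 by unfold succN; split_ifs <;> omega, bandN_5 h5, bandN_5 (by omega)]
      omega

lemma bandN_v
    (hw : 3 ≤ w) (hn : n < w)
    (hs : sv ≠ sv') (hsB : 1 ≤ sv ∧ sv ≤ 3) (hsB' : 1 ≤ sv' ∧ sv' ≤ 3)
    (hg : (1 ≤ g0 ∧ g0 ≤ 3) ∧ (1 ≤ g1 ∧ g1 ≤ 3) ∧ (1 ≤ g2 ∧ g2 ≤ 3) ∧ (1 ≤ g3 ∧ g3 ≤ 3))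
    (he : (1 ≤ e1 ∧ e1 ≤ 3) ∧ (1 ≤ e3 ∧ e3 ≤ 3)) (hf : (1 ≤ f0 ∧ f0 ≤ 3) ∧ (1 ≤ f2 ∧ f2 ≤ 3))
    (hg01 : g0 ≠ g1) (hg12 : g1 ≠ g2) (hg23 : g2 ≠ g3) (hg30 : g3 ≠ g0) (hm : m < 4) :
    bandN w sv g0 g1 g2 g3 e1 e3 f0 f2 m n ≠ bandN w sv' g0 g1 g2 g3 e1 e3 f0 f2 (succN 4 m) n := by
  rcases (show n = 0 ∨ n = 1 ∨ n = 2 ∨ n = 3 ∨ n = 4 ∨ 5 ≤ n by omega) with rfl|rfl|rfl|rfl|rfl|h5 <;>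
  interval_cases m <;>
    simp only [bandN_0, bandN_1, bandN_2, bandN_3, bandN_4, show succN 4 0 = 1 from rfl,
      show succN 4 1 = 2 from rfl, show succN 4 2 = 3 from rfl, show succN 4 3 = 0 from rfl] <;>
    first
      | (rw [bandN_5 h5, bandN_5 h5]; omega)
      | (split_ifs <;> first | exact ‹False›.elim | omega)

section EvalExtra
variable {w sv g0 g1 g2 g3 e1 e3 f0 f2 m n : ℕ}

lemma bandN_e_eval (hm : m % 2 = 1) (hec : n = 3 ∨ (w = 3 ∧ n = 0)) :
    bandN w sv g0 g1 g2 g3 e1 e3 f0 f2 m n = if m = 1 then e1 else e3 := by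
  unfold bandN; split_ifs <;> first | exact ‹False›.elim | rfl | omega

lemma bandN_f_eval (hm : m % 2 = 0) (hn : n = 1) :
    bandN w sv g0 g1 g2 g3 e1 e3 f0 f2 m n = if m = 0 then f0 else f2 := by
  unfold bandN; split_ifs <;> first | exact ‹False›.elim | rfl | omega

end EvalExtra

/-! ### nat-level diff lemmas -/

section Diff
variable {w sv g0 g1 g2 g3 e1 e3 f0 f2 e1' e3' f0' f2' g0' g1' g2' g3' m n : ℕ}

lemma bandN_diff_e
    (h : bandN w sv g0 g1 g2 g3 e1 e3 f0 f2 m n ≠ bandN w sv g0 g1 g2 g3 e1' e3' f0 f2 m n) :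
    m % 2 = 1 ∧ (n = 3 ∨ (w = 3 ∧ n = 0)) := by
  unfold bandN at h
  split_ifs at h <;> first | exact ‹False›.elim | exact absurd rfl h | omega

lemma bandN_diff_f
    (h : bandN w sv g0 g1 g2 g3 e1 e3 f0 f2 m n ≠ bandN w sv g0 g1 g2 g3 e1 e3 f0' f2' m n) :
    m % 2 = 0 ∧ n = 1 := by
  unfold bandN at h
  split_ifs at h <;> first | exact ‹False›.elim | exact absurd rfl h | omega

lemma bandN_diff_gOdd (hm : m < 4)
    (h : bandN w sv g0 g1 g2 g3 e1 e3 f0 f2 m n ≠ bandN w sv g0 g1' g2 g3' e1 e3 f0 f2 m n) :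
    n = 2 ∧ m % 2 = 1 := by
  unfold bandN at h
  split_ifs at h <;> first | exact ‹False›.elim | exact absurd rfl h | omega

lemma bandN_diff_gEven (hm : m < 4)
    (h : bandN w sv g0 g1 g2 g3 e1 e3 f0 f2 m n ≠ bandN w sv g0' g1 g2' g3 e1 e3 f0 f2 m n) :
    n = 2 ∧ m % 2 = 0 := by
  unfold bandN at h
  split_ifs at h <;> first | exact ‹False›.elim | exact absurd rfl h | omega

lemma bandN_eq4
    (hg : (1 ≤ g0 ∧ g0 ≤ 3) ∧ (1 ≤ g1 ∧ g1 ≤ 3) ∧ (1 ≤ g2 ∧ g2 ≤ 3) ∧ (1 ≤ g3 ∧ g3 ≤ 3))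
    (he : (1 ≤ e1 ∧ e1 ≤ 3) ∧ (1 ≤ e3 ∧ e3 ≤ 3)) (hf : (1 ≤ f0 ∧ f0 ≤ 3) ∧ (1 ≤ f2 ∧ f2 ≤ 3))
    (hs : 1 ≤ sv ∧ sv ≤ 3)
    (h : bandN w sv g0 g1 g2 g3 e1 e3 f0 f2 m n = 4) :
    (m % 2 = 1 ∧ (n = 1 ∨ n = 4)) ∨ (m % 2 = 0 ∧ (n = 0 ∨ n = 3)) := by
  unfold bandN at h
  split_ifs at h <;> first | exact ‹False›.elim | omega

lemma bandN_diff_base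
    (h : bandN w sv g0 g1 g2 g3 e1 e3 f0 f2 m n ≠ sv) :
    (n = 2) ∨ (m % 2 = 1 ∧ (n = 3 ∨ (w = 3 ∧ n = 0))) ∨ (m % 2 = 0 ∧ n = 1)
      ∨ (m % 2 = 1 ∧ (n = 1 ∨ n = 4)) ∨ (m % 2 = 0 ∧ (n = 0 ∨ n = 3)) := by
  unfold bandN at h
  split_ifs at h <;> first | exact ‹False›.elim | exact absurd rfl h | omega

end Diff

/-! ### vertex-level band -/

section VB
variable {w : ℕ}

def band (w : ℕ) (s : ZMod 4 × ZMod w → ℕ) (g0 g1 g2 g3 e1 e3 f0 f2 : ℕ) :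
    ZMod 4 × ZMod w → ℕ :=
  fun v => bandN w (s v) g0 g1 g2 g3 e1 e3 f0 f2 v.1.val v.2.val

lemma band_proper (hw : 3 ≤ w) (hodd : w % 2 = 1) {s : ZMod 4 × ZMod w → ℕ}
    (hsB : ∀ v, 1 ≤ s v ∧ s v ≤ 3)
    (hsh : ∀ (a : ZMod 4) (b : ZMod w), s (a, b) ≠ s (a, b + 1))
    (hsv : ∀ (a : ZMod 4) (b : ZMod w), s (a, b) ≠ s (a + 1, b))
    {g0 g1 g2 g3 e1 e3 f0 f2 : ℕ}
    (hg : (1 ≤ g0 ∧ g0 ≤ 3) ∧ (1 ≤ g1 ∧ g1 ≤ 3) ∧ (1 ≤ g2 ∧ g2 ≤ 3) ∧ (1 ≤ g3 ∧ g3 ≤ 3))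
    (he : (1 ≤ e1 ∧ e1 ≤ 3) ∧ (1 ≤ e3 ∧ e3 ≤ 3)) (hf : (1 ≤ f0 ∧ f0 ≤ 3) ∧ (1 ≤ f2 ∧ f2 ≤ 3))
    (he1 : e1 ≠ g1) (he3 : e3 ≠ g3) (hf0 : f0 ≠ g0) (hf2 : f2 ≠ g2)
    (hg01 : g0 ≠ g1) (hg12 : g1 ≠ g2) (hg23 : g2 ≠ g3) (hg30 : g3 ≠ g0) :
    IsProperColoring (torGrid 4 w) 4 (band w s g0 g1 g2 g3 e1 e3 f0 f2) := by
  haveI : NeZero w := ⟨by omega⟩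
  apply proper_of
  · intro v
    have := bandN_mem (w := w) (m := v.1.val) (n := v.2.val) (hsB v) hg he hf
    simpa [band, Finset.mem_Icc] using this
  · intro a b
    show bandN w (s (a, b)) _ _ _ _ _ _ _ _ _ _ ≠ bandN w (s (a, b+1)) _ _ _ _ _ _ _ _ _ _
    simp only [val_succ_w hw]
    exact bandN_h hw hodd (ZMod.val_lt b) (ZMod.val_lt a) (hsh a b) (hsB _) (hsB _)
      hg he hf he1 he3 hf0 hf2
  · intro a b
    show bandN w (s (a, b)) _ _ _ _ _ _ _ _ _ _ ≠ bandN w (s (a+1, b)) _ _ _ _ _ _ _ _ _ _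
    simp only [val_succ_4]
    exact bandN_v hw (ZMod.val_lt b) (hsv a b) (hsB _) (hsB _)
      hg he hf hg01 hg12 hg23 hg30 (ZMod.val_lt a)

lemma band_step_e (hw : 3 ≤ w) (hodd : w % 2 = 1) {s : ZMod 4 × ZMod w → ℕ}
    {g0 g1 g2 g3 e1 e3 f0 f2 e1' e3' : ℕ} :
    ∀ ⦃u v : ZMod 4 × ZMod w⦄, (torGrid 4 w).Adj u v →
      band w s g0 g1 g2 g3 e1 e3 f0 f2 u = band w s g0 g1 g2 g3 e1' e3' f0 f2 u ∨
      band w s g0 g1 g2 g3 e1 e3 f0 f2 v = band w s g0 g1 g2 g3 e1' e3' f0 f2 v := by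
  haveI : NeZero w := ⟨by omega⟩
  apply step_of (S := fun v => v.1.val % 2 = 1 ∧ (v.2.val = 3 ∨ (w = 3 ∧ v.2.val = 0)))
  · intro v hne
    exact bandN_diff_e hne
  · intro u v hadj Su Sv
    have h1 := ZMod.val_lt u.1
    have h2 := ZMod.val_lt v.1
    have h3 := ZMod.val_lt u.2
    have h4 := ZMod.val_lt v.2
    rcases adj_val hw hadj with ⟨-, hc | hc⟩ | ⟨-, hc | hc⟩ <;>
      (unfold succN at hc; split_ifs at hc <;> omega)

lemma band_step_f (hw : 3 ≤ w) (hodd : w % 2 = 1) {s : ZMod 4 × ZMod w → ℕ}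
    {g0 g1 g2 g3 e1 e3 f0 f2 f0' f2' : ℕ} :
    ∀ ⦃u v : ZMod 4 × ZMod w⦄, (torGrid 4 w).Adj u v →
      band w s g0 g1 g2 g3 e1 e3 f0 f2 u = band w s g0 g1 g2 g3 e1 e3 f0' f2' u ∨
      band w s g0 g1 g2 g3 e1 e3 f0 f2 v = band w s g0 g1 g2 g3 e1 e3 f0' f2' v := by
  haveI : NeZero w := ⟨by omega⟩
  apply step_of (S := fun v => v.1.val % 2 = 0 ∧ v.2.val = 1)
  · intro v hne
    exact bandN_diff_f hne
  · intro u v hadj Su Sv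
    have h1 := ZMod.val_lt u.1
    have h2 := ZMod.val_lt v.1
    have h3 := ZMod.val_lt u.2
    have h4 := ZMod.val_lt v.2
    rcases adj_val hw hadj with ⟨-, hc | hc⟩ | ⟨-, hc | hc⟩ <;>
      (unfold succN at hc; split_ifs at hc <;> omega)

lemma band_step_gOdd (hw : 3 ≤ w) (hodd : w % 2 = 1) {s : ZMod 4 × ZMod w → ℕ}
    {g0 g1 g2 g3 e1 e3 f0 f2 g1' g3' : ℕ} :
    ∀ ⦃u v : ZMod 4 × ZMod w⦄, (torGrid 4 w).Adj u v →
      band w s g0 g1 g2 g3 e1 e3 f0 f2 u = band w s g0 g1' g2 g3' e1 e3 f0 f2 u ∨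
      band w s g0 g1 g2 g3 e1 e3 f0 f2 v = band w s g0 g1' g2 g3' e1 e3 f0 f2 v := by
  haveI : NeZero w := ⟨by omega⟩
  apply step_of (S := fun v => v.2.val = 2 ∧ v.1.val % 2 = 1)
  · intro v hne
    exact bandN_diff_gOdd (ZMod.val_lt v.1) hne
  · intro u v hadj Su Sv
    have h1 := ZMod.val_lt u.1
    have h2 := ZMod.val_lt v.1
    have h3 := ZMod.val_lt u.2
    have h4 := ZMod.val_lt v.2
    rcases adj_val hw hadj with ⟨-, hc | hc⟩ | ⟨-, hc | hc⟩ <;>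
      (unfold succN at hc; split_ifs at hc <;> omega)

lemma band_step_gEven (hw : 3 ≤ w) (hodd : w % 2 = 1) {s : ZMod 4 × ZMod w → ℕ}
    {g0 g1 g2 g3 e1 e3 f0 f2 g0' g2' : ℕ} :
    ∀ ⦃u v : ZMod 4 × ZMod w⦄, (torGrid 4 w).Adj u v →
      band w s g0 g1 g2 g3 e1 e3 f0 f2 u = band w s g0' g1 g2' g3 e1 e3 f0 f2 u ∨
      band w s g0 g1 g2 g3 e1 e3 f0 f2 v = band w s g0' g1 g2' g3 e1 e3 f0 f2 v := by
  haveI : NeZero w := ⟨by omega⟩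
  apply step_of (S := fun v => v.2.val = 2 ∧ v.1.val % 2 = 0)
  · intro v hne
    exact bandN_diff_gEven (ZMod.val_lt v.1) hne
  · intro u v hadj Su Sv
    have h1 := ZMod.val_lt u.1
    have h2 := ZMod.val_lt v.1
    have h3 := ZMod.val_lt u.2
    have h4 := ZMod.val_lt v.2
    rcases adj_val hw hadj with ⟨-, hc | hc⟩ | ⟨-, hc | hc⟩ <;>
      (unfold succN at hc; split_ifs at hc <;> omega)

end VB

/-! ### class function and finisher -/

section Kap
variable {w : ℕ}

def kap (v : ZMod 4 × ZMod w) : ℕ :=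
  (v.1.val + v.2.val + (if 3 ≤ v.2.val then 1 else 0)) % 2

lemma kap_flip (hw : 3 ≤ w) (hodd : w % 2 = 1) {u v : ZMod 4 × ZMod w}
    (hadj : (torGrid 4 w).Adj u v) (hu2 : u.2.val ≠ 2) (hv2 : v.2.val ≠ 2) :
    kap u ≠ kap v := by
  haveI : NeZero w := ⟨by omega⟩
  have h1 := ZMod.val_lt u.1
  have h2 := ZMod.val_lt v.1
  have h3 := ZMod.val_lt u.2
  have h4 := ZMod.val_lt v.2
  unfold kap
  rcases adj_val hw hadj with ⟨hr, hc | hc⟩ | ⟨hr, hc | hc⟩ <;>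
    [skip; skip; rw [hr]; rw [hr]] <;>
    (first
      | (rw [hr]; unfold succN at hc; split_ifs at hc ⊢ <;> omega)
      | (unfold succN at hc; split_ifs at hc ⊢ <;> omega))

lemma Pp_kap {v : ZMod 4 × ZMod w}
    (h : (v.1.val % 2 = 1 ∧ (v.2.val = 1 ∨ v.2.val = 4)) ∨
         (v.1.val % 2 = 0 ∧ (v.2.val = 0 ∨ v.2.val = 3))) : kap v = 0 := by
  unfold kap; split_ifs <;> omega

def kapE (v : ZMod 4 × ZMod w) : ℕ := (v.1.val + v.2.val) % 2

lemma kapE_flip (hw : 3 ≤ w) (heven : w % 2 = 0) {u v : ZMod 4 × ZMod w}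
    (hadj : (torGrid 4 w).Adj u v) : kapE u ≠ kapE v := by
  haveI : NeZero w := ⟨by omega⟩
  have h1 := ZMod.val_lt u.1
  have h2 := ZMod.val_lt v.1
  have h3 := ZMod.val_lt u.2
  have h4 := ZMod.val_lt v.2
  unfold kapE
  rcases adj_val hw hadj with ⟨hr, hc | hc⟩ | ⟨hr, hc | hc⟩ <;>
    [rw [hr]; rw [hr]; rw [hr]; rw [hr]] <;>
    (unfold succN at hc; split_ifs at hc <;> omega)

end Kap

/-! ### the schedule -/

def col (w k : ℕ) : ZMod w := (k : ZMod w)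

lemma col_succ (w k : ℕ) : col w k + 1 = col w (k + 1) := by
  unfold col; push_cast; ring

section Sched
variable (w : ℕ) (s t : ZMod 4 × ZMod w → ℕ)

def sc (i : ZMod 4) : ℕ := s (i, col w 2)
def tc (i : ZMod 4) : ℕ := t (i, col w 2)
def pv : ℕ := pick2 (sc w s 0) (sc w s 2)
def uv : ℕ := pick2 (tc w t 1) (tc w t 3)
def qv : ℕ := pick2 (pv w s) (uv w t)
def rv : ℕ := pick2 (qv w s t) (uv w t)
def e1Z : ℕ := s (1, col w 3)
def e3Z : ℕ := s (3, col w 3)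
def f0Z : ℕ := s (0, col w 1)
def f2Z : ℕ := s (2, col w 1)
def e1A : ℕ := pick2 (sc w s 1) (pv w s)
def e3A : ℕ := pick2 (sc w s 3) (pv w s)
def f0A : ℕ := pick2 (sc w s 0) (qv w s t)
def f2A : ℕ := pick2 (sc w s 2) (qv w s t)
def eB : ℕ := pick2 (pv w s) (rv w s t)
def fB : ℕ := pick2 (qv w s t) (uv w t)
def e1C : ℕ := pick2 (rv w s t) (tc w t 1)
def e3C : ℕ := pick2 (rv w s t) (tc w t 3)
def f0C : ℕ := pick2 (uv w t) (tc w t 0)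
def f2C : ℕ := pick2 (uv w t) (tc w t 2)

def midC : ZMod 4 × ZMod w → ℕ :=
  band w s (tc w t 0) (tc w t 1) (tc w t 2) (tc w t 3)
    (e1C w s t) (e3C w s t) (f0C w t) (f2C w t)

def Y : ℕ → ZMod 4 × ZMod w → ℕ
  | 0 => s
  | 1 => band w s (sc w s 0) (sc w s 1) (sc w s 2) (sc w s 3) (e1Z w s) (e3Z w s) (f0Z w s) (f2Z w s)
  | 2 => band w s (sc w s 0) (sc w s 1) (sc w s 2) (sc w s 3) (e1A w s) (e3A w s) (f0Z w s) (f2Z w s)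
  | 3 => band w s (sc w s 0) (pv w s) (sc w s 2) (pv w s) (e1A w s) (e3A w s) (f0Z w s) (f2Z w s)
  | 4 => band w s (sc w s 0) (pv w s) (sc w s 2) (pv w s) (e1A w s) (e3A w s) (f0A w s t) (f2A w s t)
  | 5 => band w s (qv w s t) (pv w s) (qv w s t) (pv w s) (e1A w s) (e3A w s) (f0A w s t) (f2A w s t)
  | 6 => band w s (qv w s t) (pv w s) (qv w s t) (pv w s) (eB w s t) (eB w s t) (f0A w s t) (f2A w s t)
  | 7 => band w s (qv w s t) (rv w s t) (qv w s t) (rv w s t) (eB w s t) (eB w s t) (f0A w s t) (f2A w s t)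
  | 8 => band w s (qv w s t) (rv w s t) (qv w s t) (rv w s t) (eB w s t) (eB w s t) (fB w s t) (fB w s t)
  | 9 => band w s (uv w t) (rv w s t) (uv w t) (rv w s t) (eB w s t) (eB w s t) (fB w s t) (fB w s t)
  | 10 => band w s (uv w t) (rv w s t) (uv w t) (rv w s t) (e1C w s t) (e3C w s t) (fB w s t) (fB w s t)
  | 11 => band w s (uv w t) (tc w t 1) (uv w t) (tc w t 3) (e1C w s t) (e3C w s t) (fB w s t) (fB w s t)
  | 12 => band w s (uv w t) (tc w t 1) (uv w t) (tc w t 3) (e1C w s t) (e3C w s t) (f0C w t) (f2C w t)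
  | 13 => midC w s t
  | 14 => fun v => if midC w s t v ≠ t v ∧ kap v = 0 then 4 else midC w s t v
  | 15 => fun v => if midC w s t v ≠ t v ∧ kap v = 0 then 4 else t v
  | _ => t

def YE : ℕ → ZMod 4 × ZMod w → ℕ
  | 0 => s
  | 1 => fun v => if s v ≠ t v ∧ kapE v = 0 then 4 else s v
  | 2 => fun v => if s v ≠ t v ∧ kapE v = 0 then 4 else t v
  | _ => t

end Sched

/-! ### main theorems -/

section Main
variable {w : ℕ}

set_option maxHeartbeats 1000000 in
theorem odd_main (hw : 3 ≤ w) (hodd : w % 2 = 1) (s t : ZMod 4 × ZMod w → ℕ)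
    (hs : IsProperColoring (torGrid 4 w) 3 s) (ht : IsProperColoring (torGrid 4 w) 3 t) :
    IsRecolorSchedule (torGrid 4 w) 4 s t 16 (Y w s t) := by
  haveI : NeZero w := ⟨by omega⟩
  -- basic facts about s and t
  have hsB : ∀ v, 1 ≤ s v ∧ s v ≤ 3 := fun v => by
    have := hs.1 v; rw [Finset.mem_Icc] at this; exact this
  have htB : ∀ v, 1 ≤ t v ∧ t v ≤ 3 := fun v => by
    have := ht.1 v; rw [Finset.mem_Icc] at this; exact this
  have hsh : ∀ (a : ZMod 4) (b : ZMod w), s (a, b) ≠ s (a, b + 1) := fun a b => hs.2 (adj_h hw a b)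
  have hsv : ∀ (a : ZMod 4) (b : ZMod w), s (a, b) ≠ s (a + 1, b) := fun a b => hs.2 (adj_v a b)
  have hth : ∀ (a : ZMod 4) (b : ZMod w), t (a, b) ≠ t (a, b + 1) := fun a b => ht.2 (adj_h hw a b)
  have htv : ∀ (a : ZMod 4) (b : ZMod w), t (a, b) ≠ t (a + 1, b) := fun a b => ht.2 (adj_v a b)
  have r01 : (0 : ZMod 4) + 1 = 1 := by decide
  have r12 : (1 : ZMod 4) + 1 = 2 := by decide
  have r23 : (2 : ZMod 4) + 1 = 3 := by decide
  have r30 : (3 : ZMod 4) + 1 = 0 := by decide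
  have c12 : col w 1 + 1 = col w 2 := by unfold col; push_cast; norm_num
  have c23 : col w 2 + 1 = col w 3 := by unfold col; push_cast; norm_num
  -- vertical facts in column 2
  have hs01 : sc w s 0 ≠ sc w s 1 := by have := hsv 0 (col w 2); rwa [r01] at this
  have hs12 : sc w s 1 ≠ sc w s 2 := by have := hsv 1 (col w 2); rwa [r12] at this
  have hs23 : sc w s 2 ≠ sc w s 3 := by have := hsv 2 (col w 2); rwa [r23] at this
  have hs30 : sc w s 3 ≠ sc w s 0 := by have := hsv 3 (col w 2); rwa [r30] at this
  have ht01 : tc w t 0 ≠ tc w t 1 := by have := htv 0 (col w 2); rwa [r01] at this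
  have ht12 : tc w t 1 ≠ tc w t 2 := by have := htv 1 (col w 2); rwa [r12] at this
  have ht23 : tc w t 2 ≠ tc w t 3 := by have := htv 2 (col w 2); rwa [r23] at this
  have ht30 : tc w t 3 ≠ tc w t 0 := by have := htv 3 (col w 2); rwa [r30] at this
  -- horizontal facts
  have hz1 : sc w s 1 ≠ e1Z w s := by have := hsh 1 (col w 2); rwa [c23] at this
  have hz3 : sc w s 3 ≠ e3Z w s := by have := hsh 3 (col w 2); rwa [c23] at this
  have hf0Zs : f0Z w s ≠ sc w s 0 := by have := hsh 0 (col w 1); rwa [c12] at this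
  have hf2Zs : f2Z w s ≠ sc w s 2 := by have := hsh 2 (col w 1); rwa [c12] at this
  -- pick2 specs
  have Spv := pick2_spec (sc w s 0) (sc w s 2)
  have Suv := pick2_spec (tc w t 1) (tc w t 3)
  have Sqv := pick2_spec (pv w s) (uv w t)
  have Srv := pick2_spec (qv w s t) (uv w t)
  have Se1A := pick2_spec (sc w s 1) (pv w s)
  have Se3A := pick2_spec (sc w s 3) (pv w s)
  have Sf0A := pick2_spec (sc w s 0) (qv w s t)
  have Sf2A := pick2_spec (sc w s 2) (qv w s t)
  have SeB := pick2_spec (pv w s) (rv w s t)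
  have SfB := pick2_spec (qv w s t) (uv w t)
  have Se1C := pick2_spec (rv w s t) (tc w t 1)
  have Se3C := pick2_spec (rv w s t) (tc w t 3)
  have Sf0C := pick2_spec (uv w t) (tc w t 0)
  have Sf2C := pick2_spec (uv w t) (tc w t 2)
  -- proper colorings
  have p0 : IsProperColoring (torGrid 4 w) 4 s := by
    refine ⟨fun v => ?_, hs.2⟩
    rw [Finset.mem_Icc]; have := hsB v; omega
  have p16 : IsProperColoring (torGrid 4 w) 4 t := by
    refine ⟨fun v => ?_, ht.2⟩
    rw [Finset.mem_Icc]; have := htB v; omega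
  have p1 : IsProperColoring (torGrid 4 w) 4 (Y w s t 1) :=
    band_proper hw hodd hsB hsh hsv ⟨hsB _, hsB _, hsB _, hsB _⟩ ⟨hsB _, hsB _⟩ ⟨hsB _, hsB _⟩
      hz1.symm hz3.symm hf0Zs hf2Zs hs01 hs12 hs23 hs30
  have p2 : IsProperColoring (torGrid 4 w) 4 (Y w s t 2) :=
    band_proper hw hodd hsB hsh hsv ⟨hsB _, hsB _, hsB _, hsB _⟩ ⟨Se1A.2.2, Se3A.2.2⟩ ⟨hsB _, hsB _⟩
      Se1A.1 Se3A.1 hf0Zs hf2Zs hs01 hs12 hs23 hs30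
  have p3 : IsProperColoring (torGrid 4 w) 4 (Y w s t 3) :=
    band_proper hw hodd hsB hsh hsv ⟨hsB _, Spv.2.2, hsB _, Spv.2.2⟩ ⟨Se1A.2.2, Se3A.2.2⟩ ⟨hsB _, hsB _⟩
      Se1A.2.1 Se3A.2.1 hf0Zs hf2Zs Spv.1.symm Spv.2.1 Spv.2.1.symm Spv.1
  have p4 : IsProperColoring (torGrid 4 w) 4 (Y w s t 4) :=
    band_proper hw hodd hsB hsh hsv ⟨hsB _, Spv.2.2, hsB _, Spv.2.2⟩ ⟨Se1A.2.2, Se3A.2.2⟩ ⟨Sf0A.2.2, Sf2A.2.2⟩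
      Se1A.2.1 Se3A.2.1 Sf0A.1 Sf2A.1 Spv.1.symm Spv.2.1 Spv.2.1.symm Spv.1
  have p5 : IsProperColoring (torGrid 4 w) 4 (Y w s t 5) :=
    band_proper hw hodd hsB hsh hsv ⟨Sqv.2.2, Spv.2.2, Sqv.2.2, Spv.2.2⟩ ⟨Se1A.2.2, Se3A.2.2⟩ ⟨Sf0A.2.2, Sf2A.2.2⟩
      Se1A.2.1 Se3A.2.1 Sf0A.2.1 Sf2A.2.1 Sqv.1 Sqv.1.symm Sqv.1 Sqv.1.symm
  have p6 : IsProperColoring (torGrid 4 w) 4 (Y w s t 6) :=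
    band_proper hw hodd hsB hsh hsv ⟨Sqv.2.2, Spv.2.2, Sqv.2.2, Spv.2.2⟩ ⟨SeB.2.2, SeB.2.2⟩ ⟨Sf0A.2.2, Sf2A.2.2⟩
      SeB.1 SeB.1 Sf0A.2.1 Sf2A.2.1 Sqv.1 Sqv.1.symm Sqv.1 Sqv.1.symm
  have p7 : IsProperColoring (torGrid 4 w) 4 (Y w s t 7) :=
    band_proper hw hodd hsB hsh hsv ⟨Sqv.2.2, Srv.2.2, Sqv.2.2, Srv.2.2⟩ ⟨SeB.2.2, SeB.2.2⟩ ⟨Sf0A.2.2, Sf2A.2.2⟩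
      SeB.2.1 SeB.2.1 Sf0A.2.1 Sf2A.2.1 Srv.1.symm Srv.1 Srv.1.symm Srv.1
  have p8 : IsProperColoring (torGrid 4 w) 4 (Y w s t 8) :=
    band_proper hw hodd hsB hsh hsv ⟨Sqv.2.2, Srv.2.2, Sqv.2.2, Srv.2.2⟩ ⟨SeB.2.2, SeB.2.2⟩ ⟨SfB.2.2, SfB.2.2⟩
      SeB.2.1 SeB.2.1 SfB.1 SfB.1 Srv.1.symm Srv.1 Srv.1.symm Srv.1
  have p9 : IsProperColoring (torGrid 4 w) 4 (Y w s t 9) :=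
    band_proper hw hodd hsB hsh hsv ⟨Suv.2.2, Srv.2.2, Suv.2.2, Srv.2.2⟩ ⟨SeB.2.2, SeB.2.2⟩ ⟨SfB.2.2, SfB.2.2⟩
      SeB.2.1 SeB.2.1 SfB.2.1 SfB.2.1 Srv.2.1.symm Srv.2.1 Srv.2.1.symm Srv.2.1
  have p10 : IsProperColoring (torGrid 4 w) 4 (Y w s t 10) :=
    band_proper hw hodd hsB hsh hsv ⟨Suv.2.2, Srv.2.2, Suv.2.2, Srv.2.2⟩ ⟨Se1C.2.2, Se3C.2.2⟩ ⟨SfB.2.2, SfB.2.2⟩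
      Se1C.1 Se3C.1 SfB.2.1 SfB.2.1 Srv.2.1.symm Srv.2.1 Srv.2.1.symm Srv.2.1
  have p11 : IsProperColoring (torGrid 4 w) 4 (Y w s t 11) :=
    band_proper hw hodd hsB hsh hsv ⟨Suv.2.2, htB _, Suv.2.2, htB _⟩ ⟨Se1C.2.2, Se3C.2.2⟩ ⟨SfB.2.2, SfB.2.2⟩
      Se1C.2.1 Se3C.2.1 SfB.2.1 SfB.2.1 Suv.1 Suv.1.symm Suv.2.1 Suv.2.1.symm
  have p12 : IsProperColoring (torGrid 4 w) 4 (Y w s t 12) :=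
    band_proper hw hodd hsB hsh hsv ⟨Suv.2.2, htB _, Suv.2.2, htB _⟩ ⟨Se1C.2.2, Se3C.2.2⟩ ⟨Sf0C.2.2, Sf2C.2.2⟩
      Se1C.2.1 Se3C.2.1 Sf0C.1 Sf2C.1 Suv.1 Suv.1.symm Suv.2.1 Suv.2.1.symm
  have p13 : IsProperColoring (torGrid 4 w) 4 (midC w s t) :=
    band_proper hw hodd hsB hsh hsv ⟨htB _, htB _, htB _, htB _⟩ ⟨Se1C.2.2, Se3C.2.2⟩ ⟨Sf0C.2.2, Sf2C.2.2⟩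
      Se1C.2.1 Se3C.2.1 Sf0C.2.1 Sf2C.2.1 ht01 ht12 ht23 ht30
  -- facts about the middle coloring
  have mid_col2 : ∀ v : ZMod 4 × ZMod w, v.2.val = 2 → midC w s t v = t v := by
    rintro ⟨v1, v2⟩ h2
    dsimp only at h2
    have hv2 : v2 = col w 2 :=
      eq_cast_of_val hw (by rw [h2]; exact (Nat.mod_eq_of_lt (by omega)).symm)
    have h4 := ZMod.val_lt v1
    show bandN w _ _ _ _ _ _ _ _ _ v1.val v2.val = _
    rw [h2, bandN_2]
    rcases (show v1.val = 0 ∨ v1.val = 1 ∨ v1.val = 2 ∨ v1.val = 3 by omega) with h|h|h|h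
    · rw [if_pos h]; unfold tc; rw [← (z4_val v1).1 h, ← hv2]
    · rw [if_neg (by omega), if_pos h]; unfold tc; rw [← (z4_val v1).2.1 h, ← hv2]
    · rw [if_neg (by omega), if_neg (by omega), if_pos h]
      unfold tc; rw [← (z4_val v1).2.2.1 h, ← hv2]
    · rw [if_neg (by omega), if_neg (by omega), if_neg (by omega)]
      unfold tc; rw [← (z4_val v1).2.2.2 h, ← hv2]
  have mid4 : ∀ v, midC w s t v = 4 → (midC w s t v ≠ t v ∧ kap v = 0) := by
    intro v h4
    refine ⟨by rw [h4]; have := htB v; omega, ?_⟩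
    exact Pp_kap (bandN_eq4 ⟨htB _, htB _, htB _, htB _⟩ ⟨Se1C.2.2, Se3C.2.2⟩
      ⟨Sf0C.2.2, Sf2C.2.2⟩ (hsB v) h4)
  have kap_lt : ∀ v : ZMod 4 × ZMod w, kap v < 2 := fun v => Nat.mod_lt _ (by norm_num)
  -- properness of the last two steps
  have p14 : IsProperColoring (torGrid 4 w) 4 (Y w s t 14) := by
    constructor
    · intro v
      show (if _ then _ else _) ∈ _
      rw [Finset.mem_Icc]
      split_ifs with h
      · omega
      · have := p13.1 v; rw [Finset.mem_Icc] at this; exact this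
    · intro u v hadj
      show (if _ then _ else _) ≠ (if _ then _ else _)
      by_cases hu : midC w s t u ≠ t u ∧ kap u = 0 <;>
        by_cases hv' : midC w s t v ≠ t v ∧ kap v = 0
      · exact absurd (hu.2.trans hv'.2.symm)
          (kap_flip hw hodd hadj (fun h => hu.1 (mid_col2 u h)) (fun h => hv'.1 (mid_col2 v h)))
      · rw [if_pos hu, if_neg hv']
        intro h; exact hv' (mid4 v h.symm)
      · rw [if_neg hu, if_pos hv']
        intro h; exact hu (mid4 u h)
      · rw [if_neg hu, if_neg hv']; exact p13.2 hadj
  have p15 : IsProperColoring (torGrid 4 w) 4 (Y w s t 15) := by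
    constructor
    · intro v
      show (if _ then _ else _) ∈ _
      rw [Finset.mem_Icc]
      split_ifs with h
      · omega
      · have := htB v; omega
    · intro u v hadj
      show (if _ then _ else _) ≠ (if _ then _ else _)
      by_cases hu : midC w s t u ≠ t u ∧ kap u = 0 <;>
        by_cases hv' : midC w s t v ≠ t v ∧ kap v = 0
      · exact absurd (hu.2.trans hv'.2.symm)
          (kap_flip hw hodd hadj (fun h => hu.1 (mid_col2 u h)) (fun h => hv'.1 (mid_col2 v h)))
      · rw [if_pos hu, if_neg hv']
        have := htB v; omega
      · rw [if_neg hu, if_pos hv']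
        have := htB u; omega
      · rw [if_neg hu, if_neg hv']; exact ht.2 hadj
  -- the special steps
  have st01 : ∀ ⦃u v : ZMod 4 × ZMod w⦄, (torGrid 4 w).Adj u v →
      Y w s t 0 u = Y w s t 1 u ∨ Y w s t 0 v = Y w s t 1 v := by
    apply step_of (S := fun v => (v.1.val % 2 = 1 ∧ (v.2.val = 1 ∨ v.2.val = 4)) ∨
      (v.1.val % 2 = 0 ∧ (v.2.val = 0 ∨ v.2.val = 3)))
    · intro v hne
      have hd := bandN_diff_base (Ne.symm hne)
      have h4 := ZMod.val_lt v.1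
      have hvw := ZMod.val_lt v.2
      rcases hd with h2 | ⟨hm, hec⟩ | ⟨hm, hfc⟩ | hP | hP
      · exfalso
        have hv2 : v.2 = col w 2 :=
          eq_cast_of_val hw (by rw [h2]; exact (Nat.mod_eq_of_lt (by omega)).symm)
        apply hne
        show s v = bandN w (s v) _ _ _ _ _ _ _ _ v.1.val v.2.val
        rw [h2, bandN_2]
        rcases (show v.1.val = 0 ∨ v.1.val = 1 ∨ v.1.val = 2 ∨ v.1.val = 3 by omega) with h|h|h|h
        · rw [if_pos h]; unfold sc; rw [← (z4_val v.1).1 h, ← hv2]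
        · rw [if_neg (by omega), if_pos h]; unfold sc; rw [← (z4_val v.1).2.1 h, ← hv2]
        · rw [if_neg (by omega), if_neg (by omega), if_pos h]
          unfold sc; rw [← (z4_val v.1).2.2.1 h, ← hv2]
        · rw [if_neg (by omega), if_neg (by omega), if_neg (by omega)]
          unfold sc; rw [← (z4_val v.1).2.2.2 h, ← hv2]
      · exfalso
        have hv2 : v.2 = col w 3 := by
          rcases hec with h3 | ⟨hw3, h0⟩
          · exact eq_cast_of_val hw (by rw [h3]; exact (Nat.mod_eq_of_lt (by omega)).symm)
          · exact eq_cast_of_val hw (by subst hw3; omega)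
        apply hne
        show s v = bandN w (s v) _ _ _ _ _ _ _ _ v.1.val v.2.val
        rw [bandN_e_eval hm hec]
        rcases (show v.1.val = 1 ∨ v.1.val = 3 by omega) with h|h
        · rw [if_pos h]; unfold e1Z; rw [← (z4_val v.1).2.1 h, ← hv2]
        · rw [if_neg (by omega)]; unfold e3Z; rw [← (z4_val v.1).2.2.2 h, ← hv2]
      · exfalso
        have hv2 : v.2 = col w 1 :=
          eq_cast_of_val hw (by rw [hfc]; exact (Nat.mod_eq_of_lt (by omega)).symm)
        apply hne
        show s v = bandN w (s v) _ _ _ _ _ _ _ _ v.1.val v.2.val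
        rw [bandN_f_eval hm hfc]
        rcases (show v.1.val = 0 ∨ v.1.val = 2 by omega) with h|h
        · rw [if_pos h]; unfold f0Z; rw [← (z4_val v.1).1 h, ← hv2]
        · rw [if_neg (by omega)]; unfold f2Z; rw [← (z4_val v.1).2.2.1 h, ← hv2]
      · exact Or.inl hP
      · exact Or.inr hP
    · intro u v hadj Su Sv
      have h1 := ZMod.val_lt u.1
      have h2 := ZMod.val_lt v.1
      have h3 := ZMod.val_lt u.2
      have h4 := ZMod.val_lt v.2
      rcases adj_val hw hadj with ⟨hr, hc | hc⟩ | ⟨hr, hc | hc⟩ <;>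
        first
          | (have hr' : u.1.val = v.1.val := congrArg ZMod.val hr
             unfold succN at hc; split_ifs at hc <;> omega)
          | (unfold succN at hc; split_ifs at hc <;> omega)
  have st1314 : ∀ ⦃u v : ZMod 4 × ZMod w⦄, (torGrid 4 w).Adj u v →
      Y w s t 13 u = Y w s t 14 u ∨ Y w s t 13 v = Y w s t 14 v := by
    apply step_of (S := fun v => midC w s t v ≠ t v ∧ kap v = 0)
    · intro v hne
      by_cases hc : midC w s t v ≠ t v ∧ kap v = 0
      · exact hc
      · exact absurd (if_neg hc).symm hne
    · intro u v hadj Su Sv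
      exact (kap_flip hw hodd hadj (fun h => Su.1 (mid_col2 u h))
        (fun h => Sv.1 (mid_col2 v h))) (Su.2.trans Sv.2.symm)
  have st1415 : ∀ ⦃u v : ZMod 4 × ZMod w⦄, (torGrid 4 w).Adj u v →
      Y w s t 14 u = Y w s t 15 u ∨ Y w s t 14 v = Y w s t 15 v := by
    apply step_of (S := fun v => midC w s t v ≠ t v ∧ kap v ≠ 0)
    · intro v hne
      by_cases hc : midC w s t v ≠ t v ∧ kap v = 0
      · exact absurd ((if_pos hc).trans (if_pos hc).symm) hne
      · have hd : midC w s t v ≠ t v := by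
          intro h
          exact hne ((if_neg hc).trans (h.trans (if_neg hc).symm))
        exact ⟨hd, fun hk => hc ⟨hd, hk⟩⟩
    · intro u v hadj Su Sv
      have := kap_lt u
      have := kap_lt v
      exact (kap_flip hw hodd hadj (fun h => Su.1 (mid_col2 u h))
        (fun h => Sv.1 (mid_col2 v h))) (by omega)
  have st1516 : ∀ ⦃u v : ZMod 4 × ZMod w⦄, (torGrid 4 w).Adj u v →
      Y w s t 15 u = Y w s t 16 u ∨ Y w s t 15 v = Y w s t 16 v := by
    apply step_of (S := fun v => midC w s t v ≠ t v ∧ kap v = 0)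
    · intro v hne
      by_cases hc : midC w s t v ≠ t v ∧ kap v = 0
      · exact hc
      · exact absurd (if_neg hc) hne
    · intro u v hadj Su Sv
      exact (kap_flip hw hodd hadj (fun h => Su.1 (mid_col2 u h))
        (fun h => Sv.1 (mid_col2 v h))) (Su.2.trans Sv.2.symm)
  refine ⟨rfl, rfl, ?_, ?_⟩
  · intro i hi
    interval_cases i
    exacts [p0, p1, p2, p3, p4, p5, p6, p7, p8, p9, p10, p11, p12, p13, p14, p15, p16]
  · intro i hi1 hi2
    interval_cases i
    exacts [st01, band_step_e hw hodd, band_step_gOdd hw hodd, band_step_f hw hodd,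
      band_step_gEven hw hodd, band_step_e hw hodd, band_step_gOdd hw hodd,
      band_step_f hw hodd, band_step_gEven hw hodd, band_step_e hw hodd,
      band_step_gOdd hw hodd, band_step_f hw hodd, band_step_gEven hw hodd,
      st1314, st1415, st1516]

theorem even_main (hw : 3 ≤ w) (heven : w % 2 = 0) (s t : ZMod 4 × ZMod w → ℕ)
    (hs : IsProperColoring (torGrid 4 w) 3 s) (ht : IsProperColoring (torGrid 4 w) 3 t) :
    IsRecolorSchedule (torGrid 4 w) 4 s t 3 (YE w s t) := by
  have hsB : ∀ v, 1 ≤ s v ∧ s v ≤ 3 := fun v => by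
    have := hs.1 v; rw [Finset.mem_Icc] at this; exact this
  have htB : ∀ v, 1 ≤ t v ∧ t v ≤ 3 := fun v => by
    have := ht.1 v; rw [Finset.mem_Icc] at this; exact this
  have kapE_lt : ∀ v : ZMod 4 × ZMod w, kapE v < 2 := fun v => Nat.mod_lt _ (by norm_num)
  have p0 : IsProperColoring (torGrid 4 w) 4 s := by
    refine ⟨fun v => ?_, hs.2⟩
    rw [Finset.mem_Icc]; have := hsB v; omega
  have p3 : IsProperColoring (torGrid 4 w) 4 t := by
    refine ⟨fun v => ?_, ht.2⟩
    rw [Finset.mem_Icc]; have := htB v; omega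
  have p1 : IsProperColoring (torGrid 4 w) 4 (YE w s t 1) := by
    constructor
    · intro v
      show (if _ then _ else _) ∈ _
      rw [Finset.mem_Icc]
      split_ifs with h
      · omega
      · have := hsB v; omega
    · intro u v hadj
      show (if _ then _ else _) ≠ (if _ then _ else _)
      by_cases hu : s u ≠ t u ∧ kapE u = 0 <;> by_cases hv' : s v ≠ t v ∧ kapE v = 0
      · exact absurd (hu.2.trans hv'.2.symm) (kapE_flip hw heven hadj)
      · rw [if_pos hu, if_neg hv']; have := hsB v; omega
      · rw [if_neg hu, if_pos hv']; have := hsB u; omega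
      · rw [if_neg hu, if_neg hv']; exact hs.2 hadj
  have p2 : IsProperColoring (torGrid 4 w) 4 (YE w s t 2) := by
    constructor
    · intro v
      show (if _ then _ else _) ∈ _
      rw [Finset.mem_Icc]
      split_ifs with h
      · omega
      · have := htB v; omega
    · intro u v hadj
      show (if _ then _ else _) ≠ (if _ then _ else _)
      by_cases hu : s u ≠ t u ∧ kapE u = 0 <;> by_cases hv' : s v ≠ t v ∧ kapE v = 0
      · exact absurd (hu.2.trans hv'.2.symm) (kapE_flip hw heven hadj)
      · rw [if_pos hu, if_neg hv']; have := htB v; omega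
      · rw [if_neg hu, if_pos hv']; have := htB u; omega
      · rw [if_neg hu, if_neg hv']; exact ht.2 hadj
  have st01 : ∀ ⦃u v : ZMod 4 × ZMod w⦄, (torGrid 4 w).Adj u v →
      YE w s t 0 u = YE w s t 1 u ∨ YE w s t 0 v = YE w s t 1 v := by
    apply step_of (S := fun v => s v ≠ t v ∧ kapE v = 0)
    · intro v hne
      by_cases hc : s v ≠ t v ∧ kapE v = 0
      · exact hc
      · exact absurd (if_neg hc).symm hne
    · intro u v hadj Su Sv
      exact (kapE_flip hw heven hadj) (Su.2.trans Sv.2.symm)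
  have st12 : ∀ ⦃u v : ZMod 4 × ZMod w⦄, (torGrid 4 w).Adj u v →
      YE w s t 1 u = YE w s t 2 u ∨ YE w s t 1 v = YE w s t 2 v := by
    apply step_of (S := fun v => s v ≠ t v ∧ kapE v ≠ 0)
    · intro v hne
      by_cases hc : s v ≠ t v ∧ kapE v = 0
      · exact absurd ((if_pos hc).trans (if_pos hc).symm) hne
      · have hd : s v ≠ t v := by
          intro h
          exact hne ((if_neg hc).trans (h.trans (if_neg hc).symm))
        exact ⟨hd, fun hk => hc ⟨hd, hk⟩⟩
    · intro u v hadj Su Sv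
      have := kapE_lt u
      have := kapE_lt v
      exact (kapE_flip hw heven hadj) (by omega)
  have st23 : ∀ ⦃u v : ZMod 4 × ZMod w⦄, (torGrid 4 w).Adj u v →
      YE w s t 2 u = YE w s t 3 u ∨ YE w s t 2 v = YE w s t 3 v := by
    apply step_of (S := fun v => s v ≠ t v ∧ kapE v = 0)
    · intro v hne
      by_cases hc : s v ≠ t v ∧ kapE v = 0
      · exact hc
      · exact absurd (if_neg hc) hne
    · intro u v hadj Su Sv
      exact (kapE_flip hw heven hadj) (Su.2.trans Sv.2.symm)
  refine ⟨rfl, rfl, ?_, ?_⟩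
  · intro i hi
    interval_cases i
    exacts [p0, p1, p2, p3]
  · intro i hi1 hi2
    interval_cases i
    exacts [st01, st12, st23]

end Main


/-- 3+1 recoloring in `4 × w` toroidal grids: a schedule of constant length always exists. -/
theorem stmt_17 :
    ∃ C : ℕ, ∀ w : ℕ, 3 ≤ w →
      ∀ s t : ZMod 4 × ZMod w → ℕ,
        IsProperColoring (torGrid 4 w) 3 s → IsProperColoring (torGrid 4 w) 3 t →
        ∃ ℓ ≤ C, ∃ X : ℕ → ZMod 4 × ZMod w → ℕ, IsRecolorSchedule (torGrid 4 w) 4 s t ℓ X := by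
  refine ⟨16, fun w hw s t hs ht => ?_⟩
  by_cases hpar : w % 2 = 1
  · exact ⟨16, le_rfl, Y w s t, odd_main hw hpar s t hs ht⟩
  · exact ⟨3, by norm_num, YE w s t, even_main hw (by omega) s t hs ht⟩
end

section
/- Let h ≥ 3 and w ≥ 3, and let s and t be proper 3-colorings of the h×w toroidal grid. If the A-parity of s differs from the A-parity of t, then there is no recoloring schedule from s to t using colors {1,2,3,4}. -/
open SimpleGraph

/-- The number of type-A tiles of a coloring `x` of the `h × w` toroidal grid: positions
`(i, j)` where the `2 × 2` tile `(x(i,j), x(i,j+1), x(i+1,j), x(i+1,j+1))` equals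
`(2,3,3,1)` or `(1,3,3,2)`. -/
noncomputable def ATileCount (h w : ℕ) (x : ZMod h × ZMod w → ℕ) : ℕ :=
  {p : ZMod h × ZMod w |
    (x (p.1, p.2), x (p.1, p.2 + 1), x (p.1 + 1, p.2), x (p.1 + 1, p.2 + 1)) = (2, 3, 3, 1) ∨
    (x (p.1, p.2), x (p.1, p.2 + 1), x (p.1 + 1, p.2), x (p.1 + 1, p.2 + 1)) = (1, 3, 3, 2)
  }.ncard

/-! ### A parity invariant for recoloring with 4 colors.

`pmask` encodes a set of 16 tile patterns (found by solving a linear system over GF(2));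
the parity of the number of tiles whose pattern lies in this set is invariant under
single-vertex recolorings of proper 4-colorings, and agrees with the A-parity on
proper 3-colorings. -/

def pmask : ℕ := 266999652653140327901681285342807805350947850722305387493223276957343915605503699771567342878720

def inP (a b c d : ℕ) : Bool := Nat.testBit pmask (((a*4+b)*4+c)*4+d)

def Fx (N NE E SE S SW W NW v : ℕ) : Bool :=
  xor (inP v E S SE) (xor (inP W v SW S) (xor (inP N NE v E) (inP NW N W v)))

def l4 : List ℕ := [1,2,3,4]

def localCheck : Bool :=
  l4.all fun N => l4.all fun E => l4.all fun S => l4.all fun W =>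
  l4.all fun a => (a == N || a == E || a == S || a == W) ||
  (l4.all fun b => (b == N || b == E || b == S || b == W) ||
  (l4.all fun NE => (NE == N || NE == E) ||
  (l4.all fun SE => (SE == E || SE == S) ||
  (l4.all fun SW => (SW == S || SW == W) ||
  (l4.all fun NW => (NW == W || NW == N) ||
  (Fx N NE E SE S SW W NW a == Fx N NE E SE S SW W NW b))))))

set_option maxHeartbeats 1600000 in
theorem localCheck_true : localCheck = true := by decide

lemma local_forall :
   ∀ N ∈ l4, ∀ E ∈ l4, ∀ S ∈ l4, ∀ W ∈ l4, ∀ a ∈ l4,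
    ((((a = N ∨ a = E) ∨ a = S) ∨ a = W)) ∨
    ∀ b ∈ l4, ((((b = N ∨ b = E) ∨ b = S) ∨ b = W)) ∨
    ∀ NE ∈ l4, (NE = N ∨ NE = E) ∨
    ∀ SE ∈ l4, (SE = E ∨ SE = S) ∨
    ∀ SW ∈ l4, (SW = S ∨ SW = W) ∨
    ∀ NW ∈ l4, (NW = W ∨ NW = N) ∨
    Fx N NE E SE S SW W NW a = Fx N NE E SE S SW W NW b := by
  have hc := localCheck_true
  unfold localCheck at hc
  simpa only [List.all_eq_true, Bool.or_eq_true, beq_iff_eq] using hc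

set_option maxHeartbeats 800000 in
lemma local_apply (N NE E SE S SW W NW a b : ℕ)
    (hN : N ∈ l4) (hNE : NE ∈ l4) (hE : E ∈ l4) (hSE : SE ∈ l4) (hS : S ∈ l4)
    (hSW : SW ∈ l4) (hW : W ∈ l4) (hNW : NW ∈ l4) (ha : a ∈ l4) (hb : b ∈ l4)
    (haN : a ≠ N) (haE : a ≠ E) (haS : a ≠ S) (haW : a ≠ W)
    (hbN : b ≠ N) (hbE : b ≠ E) (hbS : b ≠ S) (hbW : b ≠ W)
    (h1 : N ≠ NE) (h2 : NE ≠ E) (h3 : E ≠ SE) (h4 : SE ≠ S)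
    (h5 : S ≠ SW) (h6 : SW ≠ W) (h7 : W ≠ NW) (h8 : NW ≠ N) :
    Fx N NE E SE S SW W NW a = Fx N NE E SE S SW W NW b := by
  rcases local_forall N hN E hE S hS W hW a ha with (((h'|h')|h')|h') | hc
  · exact absurd h' haN
  · exact absurd h' haE
  · exact absurd h' haS
  · exact absurd h' haW
  rcases hc b hb with (((h'|h')|h')|h') | hc
  · exact absurd h' hbN
  · exact absurd h' hbE
  · exact absurd h' hbS
  · exact absurd h' hbW
  rcases hc NE hNE with (h'|h') | hc
  · exact absurd h'.symm h1
  · exact absurd h' h2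
  rcases hc SE hSE with (h'|h') | hc
  · exact absurd h'.symm h3
  · exact absurd h' h4
  rcases hc SW hSW with (h'|h') | hc
  · exact absurd h' h5.symm
  · exact absurd h' h6
  rcases hc NW hNW with (h'|h') | hc
  · exact absurd h'.symm h7
  · exact absurd h' h8
  exact hc

lemma mem_l4 {n : ℕ} (hn : n ∈ Finset.Icc 1 4) : n ∈ l4 := by
  simp only [Finset.mem_Icc] at hn
  obtain ⟨h1, h2⟩ := hn
  interval_cases n <;> simp [l4]

lemma inP_three (a b c d : ℕ)
    (ha : a ∈ Finset.Icc 1 3) (hb : b ∈ Finset.Icc 1 3)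
    (hc : c ∈ Finset.Icc 1 3) (hd : d ∈ Finset.Icc 1 3) :
    inP a b c d = true ↔
      ((a, b, c, d) = (2, 3, 3, 1) ∨ (a, b, c, d) = (1, 3, 3, 2)) := by
  simp only [Finset.mem_Icc] at ha hb hc hd
  obtain ⟨ha1, ha2⟩ := ha; obtain ⟨hb1, hb2⟩ := hb
  obtain ⟨hc1, hc2⟩ := hc; obtain ⟨hd1, hd2⟩ := hd
  interval_cases a <;> interval_cases b <;> interval_cases c <;> interval_cases d <;> decide

lemma bool8 : ∀ b1 b2 b3 b4 c1 c2 c3 c4 : Bool,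
    xor b1 (xor b2 (xor b3 b4)) = xor c1 (xor c2 (xor c3 c4)) →
    ((if b1 then (1 : ZMod 2) else 0) - (if c1 then 1 else 0)) +
    (((if b2 then (1 : ZMod 2) else 0) - (if c2 then 1 else 0)) +
    (((if b3 then (1 : ZMod 2) else 0) - (if c3 then 1 else 0)) +
    ((if b4 then (1 : ZMod 2) else 0) - (if c4 then 1 else 0)))) = 0 := by decide

def tileB (h w : ℕ) (x : ZMod h × ZMod w → ℕ) (p : ZMod h × ZMod w) : Bool :=
  inP (x (p.1, p.2)) (x (p.1, p.2 + 1)) (x (p.1 + 1, p.2)) (x (p.1 + 1, p.2 + 1))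

def Ip (h w : ℕ) [NeZero h] [NeZero w] (x : ZMod h × ZMod w → ℕ) : ZMod 2 :=
  ∑ p : ZMod h × ZMod w, (if tileB h w x p then 1 else 0)

lemma add_one_ne {n : ℕ} (hn : 3 ≤ n) (a : ZMod n) : a + 1 ≠ a := by
  haveI : NeZero n := ⟨by omega⟩
  intro hEq
  have h1 : ((1 : ℕ) : ZMod n) = ((0 : ℕ) : ZMod n) := by
    have := add_eq_left.mp hEq
    push_cast
    simpa using this
  rw [ZMod.natCast_eq_natCast_iff'] at h1
  rw [Nat.mod_eq_of_lt (by omega), Nat.zero_mod] at h1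
  exact one_ne_zero h1

lemma add_two_ne {n : ℕ} (hn : 3 ≤ n) (a : ZMod n) : a + 1 + 1 ≠ a := by
  haveI : NeZero n := ⟨by omega⟩
  intro hEq
  have h2 : a + (1 + 1) = a := by rw [← add_assoc]; exact hEq
  have h1 : ((2 : ℕ) : ZMod n) = ((0 : ℕ) : ZMod n) := by
    have := add_eq_left.mp h2
    push_cast
    simpa [one_add_one_eq_two] using this
  rw [ZMod.natCast_eq_natCast_iff'] at h1
  rw [Nat.mod_eq_of_lt (by omega), Nat.zero_mod] at h1
  exact two_ne_zero h1

lemma adjh (h w : ℕ) (hw : 3 ≤ w) (a : ZMod h) (b : ZMod w) :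
    (torGrid h w).Adj (a, b) (a, b + 1) := by
  refine ⟨?_, Or.inl ⟨rfl, Or.inr (by ring)⟩⟩
  intro hEq
  exact add_one_ne hw b (congrArg Prod.snd hEq).symm

lemma adjv (h w : ℕ) (hh : 3 ≤ h) (a : ZMod h) (b : ZMod w) :
    (torGrid h w).Adj (a, b) (a + 1, b) := by
  refine ⟨?_, Or.inr ⟨rfl, Or.inr (by ring)⟩⟩
  intro hEq
  exact add_one_ne hh a (congrArg Prod.fst hEq).symm

lemma single_step (h w : ℕ) [NeZero h] [NeZero w] (hh : 3 ≤ h) (hw : 3 ≤ w)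
    (x : ZMod h × ZMod w → ℕ) (v : ZMod h × ZMod w) (c : ℕ)
    (hx : IsProperColoring (torGrid h w) 4 x)
    (hz : IsProperColoring (torGrid h w) 4 (Function.update x v c)) :
    Ip h w x = Ip h w (Function.update x v c) := by
  obtain ⟨i0, j0, rfl⟩ : ∃ i0 j0, v = (i0 + 1, j0 + 1) := by
    refine ⟨v.1 - 1, v.2 - 1, ?_⟩
    have e1 : v.1 - 1 + 1 = v.1 := by ring
    have e2 : v.2 - 1 + 1 = v.2 := by ring
    rw [e1, e2]
  have hne1h : ∀ a : ZMod h, a + 1 ≠ a := add_one_ne hh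
  have hne1w : ∀ a : ZMod w, a + 1 ≠ a := add_one_ne hw
  have fne : ∀ (a a' : ZMod h) (b b' : ZMod w), a ≠ a' → (a, b) ≠ (a', b') := by
    intro a a' b b' hne hEq
    exact hne (congrArg Prod.fst hEq)
  have sne : ∀ (a a' : ZMod h) (b b' : ZMod w), b ≠ b' → (a, b) ≠ (a', b') := by
    intro a a' b b' hne hEq
    exact hne (congrArg Prod.snd hEq)
  set z := Function.update x (i0 + 1, j0 + 1) c with hzdef
  have hzv : z (i0 + 1, j0 + 1) = c := Function.update_self _ _ _
  have hz_at : ∀ p : ZMod h × ZMod w, p ≠ (i0 + 1, j0 + 1) → z p = x p := by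
    intro p hp
    exact Function.update_of_ne hp _ _
  -- the eight neighbours are different from v
  have hNv := fne i0 (i0+1) (j0+1) (j0+1) (hne1h i0).symm
  have hNEv := fne i0 (i0+1) (j0+1+1) (j0+1) (hne1h i0).symm
  have hEv := sne (i0+1) (i0+1) (j0+1+1) (j0+1) (hne1w (j0+1))
  have hSEv := fne (i0+1+1) (i0+1) (j0+1+1) (j0+1) (hne1h (i0+1))
  have hSv := fne (i0+1+1) (i0+1) (j0+1) (j0+1) (hne1h (i0+1))
  have hSWv := fne (i0+1+1) (i0+1) j0 (j0+1) (hne1h (i0+1))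
  have hWv := sne (i0+1) (i0+1) j0 (j0+1) (hne1w j0).symm
  have hNWv := fne i0 (i0+1) j0 (j0+1) (hne1h i0).symm
  -- named colours
  set aC := x (i0 + 1, j0 + 1) with haC
  set NC := x (i0, j0 + 1) with hNC
  set NEC := x (i0, j0 + 1 + 1) with hNEC
  set EC := x (i0 + 1, j0 + 1 + 1) with hEC
  set SEC := x (i0 + 1 + 1, j0 + 1 + 1) with hSEC
  set SC := x (i0 + 1 + 1, j0 + 1) with hSC
  set SWC := x (i0 + 1 + 1, j0) with hSWC
  set WC := x (i0 + 1, j0) with hWC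
  set NWC := x (i0, j0) with hNWC
  -- adjacency facts
  have adj_vN : (torGrid h w).Adj (i0, j0+1) (i0+1, j0+1) := adjv h w hh i0 (j0+1)
  have adj_vE : (torGrid h w).Adj (i0+1, j0+1) (i0+1, j0+1+1) := adjh h w hw (i0+1) (j0+1)
  have adj_vS : (torGrid h w).Adj (i0+1, j0+1) (i0+1+1, j0+1) := adjv h w hh (i0+1) (j0+1)
  have adj_vW : (torGrid h w).Adj (i0+1, j0) (i0+1, j0+1) := adjh h w hw (i0+1) j0
  have adj_NNE : (torGrid h w).Adj (i0, j0+1) (i0, j0+1+1) := adjh h w hw i0 (j0+1)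
  have adj_NEE : (torGrid h w).Adj (i0, j0+1+1) (i0+1, j0+1+1) := adjv h w hh i0 (j0+1+1)
  have adj_ESE : (torGrid h w).Adj (i0+1, j0+1+1) (i0+1+1, j0+1+1) := adjv h w hh (i0+1) (j0+1+1)
  have adj_SSE : (torGrid h w).Adj (i0+1+1, j0+1) (i0+1+1, j0+1+1) := adjh h w hw (i0+1+1) (j0+1)
  have adj_SWS : (torGrid h w).Adj (i0+1+1, j0) (i0+1+1, j0+1) := adjh h w hw (i0+1+1) j0
  have adj_WSW : (torGrid h w).Adj (i0+1, j0) (i0+1+1, j0) := adjv h w hh (i0+1) j0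
  have adj_NWW : (torGrid h w).Adj (i0, j0) (i0+1, j0) := adjv h w hh i0 j0
  have adj_NWN : (torGrid h w).Adj (i0, j0) (i0, j0+1) := adjh h w hw i0 j0
  -- colour constraints for x
  have haN : aC ≠ NC := (hx.2 adj_vN).symm
  have haE : aC ≠ EC := hx.2 adj_vE
  have haS : aC ≠ SC := hx.2 adj_vS
  have haW : aC ≠ WC := (hx.2 adj_vW).symm
  have hNNE : NC ≠ NEC := hx.2 adj_NNE
  have hNEE : NEC ≠ EC := hx.2 adj_NEE
  have hESE : EC ≠ SEC := hx.2 adj_ESE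
  have hSES : SEC ≠ SC := (hx.2 adj_SSE).symm
  have hSSW : SC ≠ SWC := (hx.2 adj_SWS).symm
  have hSWW : SWC ≠ WC := (hx.2 adj_WSW).symm
  have hWNW : WC ≠ NWC := (hx.2 adj_NWW).symm
  have hNWN : NWC ≠ NC := hx.2 adj_NWN
  -- colour constraints for c
  have hcN : c ≠ NC := by
    have := hz.2 adj_vN
    rw [hz_at _ hNv, hzv] at this
    exact this.symm
  have hcE : c ≠ EC := by
    have := hz.2 adj_vE
    rw [hz_at _ hEv, hzv] at this
    exact this
  have hcS : c ≠ SC := by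
    have := hz.2 adj_vS
    rw [hz_at _ hSv, hzv] at this
    exact this
  have hcW : c ≠ WC := by
    have := hz.2 adj_vW
    rw [hz_at _ hWv, hzv] at this
    exact this.symm
  -- memberships
  have m_a : aC ∈ l4 := mem_l4 (hx.1 _)
  have m_N : NC ∈ l4 := mem_l4 (hx.1 _)
  have m_NE : NEC ∈ l4 := mem_l4 (hx.1 _)
  have m_E : EC ∈ l4 := mem_l4 (hx.1 _)
  have m_SE : SEC ∈ l4 := mem_l4 (hx.1 _)
  have m_S : SC ∈ l4 := mem_l4 (hx.1 _)
  have m_SW : SWC ∈ l4 := mem_l4 (hx.1 _)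
  have m_W : WC ∈ l4 := mem_l4 (hx.1 _)
  have m_NW : NWC ∈ l4 := mem_l4 (hx.1 _)
  have m_c : c ∈ l4 := by
    have := hz.1 (i0+1, j0+1)
    rw [hzv] at this
    exact mem_l4 this
  -- the key local identity
  have hxor : Fx NC NEC EC SEC SC SWC WC NWC aC = Fx NC NEC EC SEC SC SWC WC NWC c :=
    local_apply NC NEC EC SEC SC SWC WC NWC aC c
      m_N m_NE m_E m_SE m_S m_SW m_W m_NW m_a m_c
      haN haE haS haW hcN hcE hcS hcW
      hNNE hNEE hESE hSES hSSW hSWW hWNW hNWN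
  -- tile evaluations
  have ex1 : tileB h w x (i0+1, j0+1) = inP aC EC SC SEC := rfl
  have ex2 : tileB h w x (i0+1, j0) = inP WC aC SWC SC := rfl
  have ex3 : tileB h w x (i0, j0+1) = inP NC NEC aC EC := rfl
  have ex4 : tileB h w x (i0, j0) = inP NWC NC WC aC := rfl
  have ez1 : tileB h w z (i0+1, j0+1) = inP c EC SC SEC := by
    show inP (z (i0+1, j0+1)) (z (i0+1, j0+1+1)) (z (i0+1+1, j0+1)) (z (i0+1+1, j0+1+1))
      = inP c EC SC SEC
    rw [hzv, hz_at _ hEv, hz_at _ hSv, hz_at _ hSEv]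
  have ez2 : tileB h w z (i0+1, j0) = inP WC c SWC SC := by
    show inP (z (i0+1, j0)) (z (i0+1, j0+1)) (z (i0+1+1, j0)) (z (i0+1+1, j0+1))
      = inP WC c SWC SC
    rw [hzv, hz_at _ hWv, hz_at _ hSWv, hz_at _ hSv]
  have ez3 : tileB h w z (i0, j0+1) = inP NC NEC c EC := by
    show inP (z (i0, j0+1)) (z (i0, j0+1+1)) (z (i0+1, j0+1)) (z (i0+1, j0+1+1))
      = inP NC NEC c EC
    rw [hzv, hz_at _ hNv, hz_at _ hNEv, hz_at _ hEv]
  have ez4 : tileB h w z (i0, j0) = inP NWC NC WC c := by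
    show inP (z (i0, j0)) (z (i0, j0+1)) (z (i0+1, j0)) (z (i0+1, j0+1))
      = inP NWC NC WC c
    rw [hzv, hz_at _ hNWv, hz_at _ hNv, hz_at _ hWv]
  -- distinct tiles
  have ht12 : ((i0+1, j0+1) : ZMod h × ZMod w) ≠ (i0+1, j0) :=
    sne (i0+1) (i0+1) (j0+1) j0 (hne1w j0)
  have ht13 : ((i0+1, j0+1) : ZMod h × ZMod w) ≠ (i0, j0+1) :=
    fne (i0+1) i0 (j0+1) (j0+1) (hne1h i0)
  have ht14 : ((i0+1, j0+1) : ZMod h × ZMod w) ≠ (i0, j0) :=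
    fne (i0+1) i0 (j0+1) j0 (hne1h i0)
  have ht23 : ((i0+1, j0) : ZMod h × ZMod w) ≠ (i0, j0+1) :=
    fne (i0+1) i0 j0 (j0+1) (hne1h i0)
  have ht24 : ((i0+1, j0) : ZMod h × ZMod w) ≠ (i0, j0) :=
    fne (i0+1) i0 j0 j0 (hne1h i0)
  have ht34 : ((i0, j0+1) : ZMod h × ZMod w) ≠ (i0, j0) :=
    sne i0 i0 (j0+1) j0 (hne1w j0)
  -- tiles not in T are unchanged
  set T : Finset (ZMod h × ZMod w) :=
    {(i0+1, j0+1), (i0+1, j0), (i0, j0+1), (i0, j0)} with hT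
  have houtside : ∀ p : ZMod h × ZMod w, p ∉ T → tileB h w z p = tileB h w x p := by
    intro p hp
    simp only [hT, Finset.mem_insert, Finset.mem_singleton, not_or] at hp
    obtain ⟨hp1, hp2, hp3, hp4⟩ := hp
    have q1 : ((p.1, p.2) : ZMod h × ZMod w) ≠ (i0+1, j0+1) := hp1
    have q2 : ((p.1, p.2 + 1) : ZMod h × ZMod w) ≠ (i0+1, j0+1) := by
      intro hEq
      apply hp2
      have e1 : p.1 = i0 + 1 := congrArg Prod.fst hEq
      have e2 : p.2 + 1 = j0 + 1 := congrArg Prod.snd hEq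
      have e2' : p.2 = j0 := add_right_cancel e2
      show p = _
      rw [show p = (p.1, p.2) from rfl, e1, e2']
    have q3 : ((p.1 + 1, p.2) : ZMod h × ZMod w) ≠ (i0+1, j0+1) := by
      intro hEq
      apply hp3
      have e1 : p.1 + 1 = i0 + 1 := congrArg Prod.fst hEq
      have e1' : p.1 = i0 := add_right_cancel e1
      have e2 : p.2 = j0 + 1 := congrArg Prod.snd hEq
      show p = _
      rw [show p = (p.1, p.2) from rfl, e1', e2]
    have q4 : ((p.1 + 1, p.2 + 1) : ZMod h × ZMod w) ≠ (i0+1, j0+1) := by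
      intro hEq
      apply hp4
      have e1 : p.1 + 1 = i0 + 1 := congrArg Prod.fst hEq
      have e2 : p.2 + 1 = j0 + 1 := congrArg Prod.snd hEq
      show p = _
      rw [show p = (p.1, p.2) from rfl, add_right_cancel e1, add_right_cancel e2]
    show inP (z (p.1, p.2)) (z (p.1, p.2+1)) (z (p.1+1, p.2)) (z (p.1+1, p.2+1))
      = inP (x (p.1, p.2)) (x (p.1, p.2+1)) (x (p.1+1, p.2)) (x (p.1+1, p.2+1))
    rw [hz_at _ q1, hz_at _ q2, hz_at _ q3, hz_at _ q4]
  -- main parity computation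
  have hmain : Ip h w x - Ip h w z = 0 := by
    have hsub : Ip h w x - Ip h w z
        = ∑ p : ZMod h × ZMod w,
            ((if tileB h w x p then (1 : ZMod 2) else 0) - (if tileB h w z p then 1 else 0)) := by
      rw [Ip, Ip, ← Finset.sum_sub_distrib]
    rw [hsub]
    rw [← Finset.sum_subset (Finset.subset_univ T) (by
      intro p _ hp
      rw [houtside p hp, sub_self])]
    rw [hT]
    rw [Finset.sum_insert (by
      simp only [Finset.mem_insert, Finset.mem_singleton]
      push_neg
      exact ⟨ht12, ht13, ht14⟩)]
    rw [Finset.sum_insert (by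
      simp only [Finset.mem_insert, Finset.mem_singleton]
      push_neg
      exact ⟨ht23, ht24⟩)]
    rw [Finset.sum_insert (by
      simp only [Finset.mem_singleton]
      exact ht34)]
    rw [Finset.sum_singleton]
    rw [ex1, ex2, ex3, ex4, ez1, ez2, ez3, ez4]
    exact bool8 _ _ _ _ _ _ _ _ hxor
  exact sub_eq_zero.mp hmain

lemma indep_aux (h w : ℕ) [NeZero h] [NeZero w] (hh : 3 ≤ h) (hw : 3 ≤ w) :
    ∀ (n : ℕ) (x y : ZMod h × ZMod w → ℕ),
      (Finset.univ.filter (fun u => x u ≠ y u)).card ≤ n →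
      IsProperColoring (torGrid h w) 4 x → IsProperColoring (torGrid h w) 4 y →
      (∀ ⦃u v⦄, (torGrid h w).Adj u v → x u = y u ∨ x v = y v) →
      Ip h w x = Ip h w y := by
  intro n
  induction n with
  | zero =>
    intro x y hcard _ _ _
    have hfe : (Finset.univ.filter (fun u => x u ≠ y u)) = ∅ :=
      Finset.card_eq_zero.mp (Nat.le_zero.mp hcard)
    have hxy : x = y := by
      funext u
      by_contra hne
      have : u ∈ Finset.univ.filter (fun u => x u ≠ y u) := by simp [hne]
      rw [hfe] at this
      exact absurd this (Finset.notMem_empty u)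
    rw [hxy]
  | succ n IH =>
    intro x y hcard hx hy hind
    by_cases hxy : ∀ u, x u = y u
    · rw [funext hxy]
    push_neg at hxy
    obtain ⟨v, hv⟩ := hxy
    set z := Function.update x v (y v) with hzdef
    have hz_at : ∀ u, u ≠ v → z u = x u := fun u hu => Function.update_of_ne hu _ _
    have hzv : z v = y v := Function.update_self _ _ _
    have hzy : ∀ u, x u = y u → z u = y u := by
      intro u hu
      by_cases huv : u = v
      · rw [huv, hzv]
      · rw [hz_at u huv]; exact hu
    have hzproper : IsProperColoring (torGrid h w) 4 z := by
      constructor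
      · intro u
        by_cases huv : u = v
        · rw [huv, hzv]; exact hy.1 v
        · rw [hz_at u huv]; exact hx.1 u
      · intro u1 u2 hadj
        by_cases h1 : u1 = v
        · have h2 : u2 ≠ v := fun hEq => hadj.ne (h1.trans hEq.symm)
          have hu : x u2 = y u2 := by
            rcases hind hadj with hu | hu
            · rw [h1] at hu; exact absurd hu hv
            · exact hu
          have hadj' : (torGrid h w).Adj v u2 := by rw [← h1]; exact hadj
          rw [h1, hzv, hz_at u2 h2, hu]
          exact hy.2 hadj'
        · by_cases h2 : u2 = v
          · have hu : x u1 = y u1 := by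
              rcases hind hadj with hu | hu
              · exact hu
              · rw [h2] at hu; exact absurd hu hv
            have hadj' : (torGrid h w).Adj u1 v := by rw [← h2]; exact hadj
            rw [h2, hzv, hz_at u1 h1, hu]
            exact hy.2 hadj'
          · rw [hz_at u1 h1, hz_at u2 h2]
            exact hx.2 hadj
    have e1 : Ip h w x = Ip h w z :=
      single_step h w hh hw x v (y v) hx hzproper
    have e2 : Ip h w z = Ip h w y := by
      apply IH z y ?_ hzproper hy ?_
      · have hfsub : Finset.univ.filter (fun u => z u ≠ y u)
            = (Finset.univ.filter (fun u => x u ≠ y u)).erase v := by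
          ext u
          simp only [Finset.mem_filter, Finset.mem_erase, Finset.mem_univ, true_and]
          constructor
          · intro hu
            have huv : u ≠ v := by
              intro hEq
              rw [hEq, hzv] at hu
              exact hu rfl
            rw [hz_at u huv] at hu
            exact ⟨huv, hu⟩
          · intro ⟨huv, hu⟩
            rw [hz_at u huv]
            exact hu
        rw [hfsub]
        have hvmem : v ∈ Finset.univ.filter (fun u => x u ≠ y u) := by simp [hv]
        rw [Finset.card_erase_of_mem hvmem]
        omega
      · intro u1 u2 hadj
        rcases hind hadj with hu | hu
        · exact Or.inl (hzy u1 hu)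
        · exact Or.inr (hzy u2 hu)
    rw [e1, e2]

lemma Ip_eq_A (h w : ℕ) [NeZero h] [NeZero w] (x : ZMod h × ZMod w → ℕ)
    (hx : IsProperColoring (torGrid h w) 3 x) :
    (ATileCount h w x : ZMod 2) = Ip h w x := by
  classical
  have h1 : ATileCount h w x
      = (Finset.univ.filter (fun p : ZMod h × ZMod w =>
          (x (p.1, p.2), x (p.1, p.2 + 1), x (p.1 + 1, p.2), x (p.1 + 1, p.2 + 1)) = (2, 3, 3, 1) ∨
          (x (p.1, p.2), x (p.1, p.2 + 1), x (p.1 + 1, p.2), x (p.1 + 1, p.2 + 1)) = (1, 3, 3, 2))).card := by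
    rw [ATileCount, Set.ncard_eq_toFinset_card', Set.toFinset_setOf]
  have h2 : (Finset.univ.filter (fun p : ZMod h × ZMod w =>
          (x (p.1, p.2), x (p.1, p.2 + 1), x (p.1 + 1, p.2), x (p.1 + 1, p.2 + 1)) = (2, 3, 3, 1) ∨
          (x (p.1, p.2), x (p.1, p.2 + 1), x (p.1 + 1, p.2), x (p.1 + 1, p.2 + 1)) = (1, 3, 3, 2)))
      = (Finset.univ.filter (fun p : ZMod h × ZMod w => tileB h w x p = true)) := by
    apply Finset.filter_congr
    intro p _
    rw [show (tileB h w x p = true) ↔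
        ((x (p.1, p.2), x (p.1, p.2+1), x (p.1+1, p.2), x (p.1+1, p.2+1)) = (2,3,3,1) ∨
         (x (p.1, p.2), x (p.1, p.2+1), x (p.1+1, p.2), x (p.1+1, p.2+1)) = (1,3,3,2)) from
      inP_three _ _ _ _ (hx.1 _) (hx.1 _) (hx.1 _) (hx.1 _)]
  rw [h1, h2, Finset.card_filter, Ip, Nat.cast_sum]
  apply Finset.sum_congr rfl
  intro p _
  split <;> simp

/-- If two proper 3-colorings of the `h × w` toroidal grid have different A-parities, then
there is no 3+1 recoloring schedule between them. -/
theorem stmt_19 (h w : ℕ) (hh : 3 ≤ h) (hw : 3 ≤ w)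
    (s t : ZMod h × ZMod w → ℕ)
    (hs : IsProperColoring (torGrid h w) 3 s) (ht : IsProperColoring (torGrid h w) 3 t)
    (hpar : ATileCount h w s % 2 ≠ ATileCount h w t % 2) :
    ¬ ∃ (ℓ : ℕ) (X : ℕ → ZMod h × ZMod w → ℕ),
      IsRecolorSchedule (torGrid h w) 4 s t ℓ X := by
  haveI : NeZero h := ⟨by omega⟩
  haveI : NeZero w := ⟨by omega⟩
  rintro ⟨ℓ, X, h0, hℓ, hprop, hstep⟩
  have key : ∀ i, i ≤ ℓ → Ip h w (X i) = Ip h w (X 0) := by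
    intro i
    induction i with
    | zero => intro _; rfl
    | succ k IHk =>
      intro hk
      have hk' : k ≤ ℓ := Nat.le_of_succ_le hk
      have hind : ∀ ⦃u v⦄, (torGrid h w).Adj u v → X k u = X (k+1) u ∨ X k v = X (k+1) v := by
        intro u v hadj
        have := hstep (k+1) (Nat.succ_le_succ (Nat.zero_le k)) hk hadj
        simpa using this
      have hI := indep_aux h w hh hw
        ((Finset.univ.filter (fun u => X k u ≠ X (k+1) u)).card)
        (X k) (X (k+1)) le_rfl (hprop k hk') (hprop (k+1) hk) hind
      rw [← hI]
      exact IHk hk'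
  have hIst : Ip h w s = Ip h w t := by
    have := key ℓ le_rfl
    rw [h0, hℓ] at this
    exact this.symm
  have hcast : ((ATileCount h w s : ℕ) : ZMod 2) = ((ATileCount h w t : ℕ) : ZMod 2) := by
    rw [Ip_eq_A h w s hs, Ip_eq_A h w t ht, hIst]
  rw [ZMod.natCast_eq_natCast_iff'] at hcast
  exact hpar hcast
end
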